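/- arXiv:2204.11235 — 6 statements merged into one kernel-verified Lean document; each statement's English description precedes it below -/
import Mathlib

section
/- Let T be an unambiguous, clean and trim 1-nT computing a continuous partial function f : A^ω ⇀ B^ω. A compatible set C is separable if and only if there exist functions i : C → I and ℓ : C → Q, words u,u',u'' ∈ A* with u' ≠ ε and |u|,|u'|,|u''| ≤ |Q|^{|Q|}, and functions α,α',α'' : C → B* such that: for all q ∈ C, i(q) →^{u|α(q)} ℓ(q) →^{u'|α'(q)} ℓ(q) →^{u''|α''(q)} q; and there exist p,q ∈ C with |α'(p)| ≠ |α'(q)|. -/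
/-- `u` is a prefix of the infinite word `y`. -/
def PrefixOf {B : Type} (u : List B) (y : ℕ → B) : Prop :=
  ∀ (i : ℕ) (h : i < u.length), u.get ⟨i, h⟩ = y i

/-- Concatenation of a finite word and an infinite word. -/
def listPrepend {B : Type} (u : List B) (y : ℕ → B) : ℕ → B :=
  fun i => if h : i < u.length then u.get ⟨i, h⟩ else y (i - u.length)

/-- The finite word `v` repeated `n` times. -/
def powList {B : Type} (v : List B) (n : ℕ) : List B :=
  (List.replicate n v).flatten

/-- The infinite word `y` equals `u · v^ω` (meaningful when `v ≠ []`). -/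
def EqUVomega {B : Type} (u v : List B) (y : ℕ → B) : Prop :=
  ∀ n : ℕ, PrefixOf (u ++ powList v n) y

/-- A one-way nondeterministic transducer (1-nT). The output function is given on
all triples; it is only relevant on the transition relation. -/
structure NT (A B : Type) where
  Q : Type
  fin : Fintype Q
  I : Set Q
  F : Set Q
  trans : Q → A → Q → Prop
  out : Q → A → Q → List B

attribute [instance] NT.fin

namespace NT

variable {A B : Type}

/-- `FinRun T q u α q'` means `q →^{u|α} q'`. -/
inductive FinRun (T : NT A B) : T.Q → List A → List B → T.Q → Prop
  | nil (q : T.Q) : FinRun T q [] [] q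
  | cons {q q' q'' : T.Q} {a : A} {u : List A} {α : List B} :
      T.trans q a q' → FinRun T q' u α q'' →
      FinRun T q (a :: u) (T.out q a q' ++ α) q''

/-- Infinite run on `x` (the `i`-th transition reads `x i`). -/
def IsRun (T : NT A B) (x : ℕ → A) (ρ : ℕ → T.Q) : Prop :=
  ∀ i : ℕ, T.trans (ρ i) (x i) (ρ (i + 1))

/-- Büchi condition: final states are visited infinitely often. -/
def Final (T : NT A B) (ρ : ℕ → T.Q) : Prop :=
  ∀ i : ℕ, ∃ j : ℕ, i ≤ j ∧ ρ j ∈ T.F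

/-- Accepting run: an initial and final run. -/
def Accepting (T : NT A B) (x : ℕ → A) (ρ : ℕ → T.Q) : Prop :=
  T.IsRun x ρ ∧ ρ 0 ∈ T.I ∧ T.Final ρ

/-- Output along the first `n` transitions of a run. -/
def outPrefix (T : NT A B) (x : ℕ → A) (ρ : ℕ → T.Q) (n : ℕ) : List B :=
  ((List.range n).map (fun i => T.out (ρ i) (x i) (ρ (i + 1)))).flatten

/-- The output along the run is infinite. -/
def InfiniteOutput (T : NT A B) (x : ℕ → A) (ρ : ℕ → T.Q) : Prop :=
  ∀ m : ℕ, ∃ n : ℕ, m ≤ (T.outPrefix x ρ n).length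

/-- The (infinite) output along the run equals `y`. -/
def OutEq (T : NT A B) (x : ℕ → A) (ρ : ℕ → T.Q) (y : ℕ → B) : Prop :=
  ∀ n : ℕ, PrefixOf (T.outPrefix x ρ n) y

/-- Every input labels at most one accepting run. -/
def Unambiguous (T : NT A B) : Prop :=
  ∀ x ρ₁ ρ₂, T.Accepting x ρ₁ → T.Accepting x ρ₂ → ρ₁ = ρ₂

/-- The partial function computed by an unambiguous 1-nT. -/
def Computes (T : NT A B) (f : (ℕ → A) → Option (ℕ → B)) : Prop :=
  ∀ x y, f x = some y ↔
    ∃ ρ, T.Accepting x ρ ∧ T.InfiniteOutput x ρ ∧ T.OutEq x ρ y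

/-- Every state occurs in some accepting run. -/
def Trim (T : NT A B) : Prop :=
  ∀ q : T.Q, ∃ x ρ, T.Accepting x ρ ∧ ∃ i, ρ i = q

/-- The output along every accepting run is infinite. -/
def Clean (T : NT A B) : Prop :=
  ∀ x ρ, T.Accepting x ρ → T.InfiniteOutput x ρ

end NT

/-- Continuity (for the Cantor topology) of a partial function on infinite words. -/
def ContinuousPartial {A B : Type} (f : (ℕ → A) → Option (ℕ → B)) : Prop :=
  ∀ x fx, f x = some fx → ∀ n : ℕ, ∃ p : ℕ, ∀ y fy, f y = some fy →
    (∀ i < p, x i = y i) → ∀ i < n, fx i = fy i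

namespace NT

variable {A B : Type}

/-- A compatible set of states: a common infinite future, one branch of which is final. -/
def Compatible (T : NT A B) (C : Set T.Q) : Prop :=
  ∃ (x : ℕ → A) (ρ : T.Q → ℕ → T.Q),
    (∀ q ∈ C, ρ q 0 = q ∧ T.IsRun x (ρ q)) ∧ ∃ q ∈ C, T.Final (ρ q)

/-- `(C,u,D)` is a pre-step, with predecessor map `pre` and outputs `val`. -/
def PreStepOn (T : NT A B) (C : Set T.Q) (u : List A) (D : Set T.Q)
    (pre : T.Q → T.Q) (val : T.Q → List B) : Prop :=
  T.Compatible C ∧ T.Compatible D ∧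
  (∀ q ∈ D, pre q ∈ C ∧ T.FinRun (pre q) u (val q) q) ∧
  (∀ q ∈ D, ∀ p ∈ C, (∃ α, T.FinRun p u α q) → p = pre q)

/-- `(C,u,D)` is a step: a pre-step with surjective predecessor map. -/
def StepOn (T : NT A B) (C : Set T.Q) (u : List A) (D : Set T.Q)
    (pre : T.Q → T.Q) (val : T.Q → List B) : Prop :=
  T.PreStepOn C u D pre val ∧ ∀ p ∈ C, ∃ q ∈ D, pre q = p

/-- `(J,u,C)` is an initial step. -/
def InitStepOn (T : NT A B) (J : Set T.Q) (u : List A) (C : Set T.Q)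
    (pre : T.Q → T.Q) (val : T.Q → List B) : Prop :=
  J ⊆ T.I ∧ T.StepOn J u C pre val

/-- `com` is the longest common prefix of the `val q` (`q ∈ C`) and
`adv q` is the advance of `q`, i.e. `val q = com ++ adv q`. -/
def AdvData (T : NT A B) (C : Set T.Q) (val : T.Q → List B)
    (com : List B) (adv : T.Q → List B) : Prop :=
  (∀ q ∈ C, val q = com ++ adv q) ∧
  (∀ c : List B, (∀ q ∈ C, c <+: val q) → c <+: com)

end NT

namespace NT

variable {A B : Type}

/-- `M := max(10, maximal length of a transition output)`. -/
def bigM (T : NT A B) [Fintype A] : ℕ :=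
  max 10 (Finset.univ.sup fun p : T.Q × A × T.Q => (T.out p.1 p.2.1 p.2.2).length)

/-- `Ω := M · |Q|^|Q|`. -/
def Omega (T : NT A B) [Fintype A] : ℕ :=
  T.bigM * Fintype.card T.Q ^ Fintype.card T.Q

/-- A compatible set is separable if it is reached by an initial step two of whose
advances have lengths differing by more than `Ω`. -/
def Separable (T : NT A B) [Fintype A] (C : Set T.Q) : Prop :=
  ∃ (J : Set T.Q) (u : List A) (pre : T.Q → T.Q) (val : T.Q → List B)
    (com : List B) (adv : T.Q → List B),
    T.InitStepOn J u C pre val ∧ T.AdvData C val com adv ∧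
    ∃ p ∈ C, ∃ q ∈ C, (adv q).length + T.Omega < (adv p).length

end NT


namespace NT
variable {A B : Type}

lemma FinRun.append_run {T : NT A B} {p q : T.Q} {u : List A} {α : List B}
    (h1 : T.FinRun p u α q) :
    ∀ {v : List A} {β : List B} {r : T.Q}, T.FinRun q v β r → T.FinRun p (u ++ v) (α ++ β) r := by
  induction h1 with
  | nil _ => intro v β r h2; simpa using h2
  | cons ht _ ih =>
      intro v β r h2
      rw [List.cons_append, List.append_assoc]
      exact FinRun.cons ht (ih h2)

def RunOn (T : NT A B) (w : List A) (r : ℕ → T.Q) : Prop :=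
  ∀ i, (h : i < w.length) → T.trans (r i) (w.get ⟨i, h⟩) (r (i+1))

def stepOut (T : NT A B) (w : List A) (r : ℕ → T.Q) (i : ℕ) : List B :=
  if h : i < w.length then T.out (r i) (w.get ⟨i, h⟩) (r (i+1)) else []

def cum (T : NT A B) (w : List A) (r : ℕ → T.Q) (t : ℕ) : ℕ :=
  ((List.range t).map fun i => (T.stepOut w r i).length).sum

lemma cum_zero {T : NT A B} {w : List A} {r : ℕ → T.Q} : T.cum w r 0 = 0 := rfl

lemma cum_succ {T : NT A B} {w : List A} {r : ℕ → T.Q} (t : ℕ) :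
    T.cum w r (t+1) = T.cum w r t + (T.stepOut w r t).length := by
  simp [cum, List.range_succ]

lemma cum_mono {T : NT A B} {w : List A} {r : ℕ → T.Q} {s t : ℕ} (h : s ≤ t) :
    T.cum w r s ≤ T.cum w r t := by
  induction t, h using Nat.le_induction with
  | base => exact le_rfl
  | succ t ht ih => rw [cum_succ]; omega

lemma stepOut_cons {T : NT A B} {a : A} {u : List A} {r : ℕ → T.Q} (i : ℕ) :
    T.stepOut (a :: u) r (i+1) = T.stepOut u (fun j => r (j+1)) i := by
  by_cases h : i < u.length
  · simp [stepOut, h, Nat.succ_lt_succ_iff]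
  · simp [stepOut, h, Nat.succ_lt_succ_iff]

lemma cum_cons {T : NT A B} {a : A} {u : List A} {r : ℕ → T.Q} (t : ℕ) :
    T.cum (a :: u) r (t+1) = (T.stepOut (a :: u) r 0).length + T.cum u (fun j => r (j+1)) t := by
  induction t with
  | zero => simp [cum_succ, cum_zero]
  | succ t ih => rw [cum_succ, ih, cum_succ, stepOut_cons]; ring

lemma RunOn.seg {T : NT A B} {w : List A} {r : ℕ → T.Q} (hr : T.RunOn w r)
    {a b : ℕ} (hab : a ≤ b) (hb : b ≤ w.length) :
    ∃ β : List B, T.FinRun (r a) ((w.drop a).take (b - a)) β (r b) ∧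
      β.length + T.cum w r a = T.cum w r b := by
  induction b, hab using Nat.le_induction with
  | base => exact ⟨[], by simpa using FinRun.nil (r a), by simp⟩
  | succ b hab ih =>
      have hblt : b < w.length := hb
      obtain ⟨β, hβ, hlen⟩ := ih (le_of_lt hblt)
      have htr := hr b hblt
      have hstep : T.FinRun (r b) [w.get ⟨b, hblt⟩]
          (T.out (r b) (w.get ⟨b, hblt⟩) (r (b+1))) (r (b+1)) := by
        simpa using FinRun.cons htr (FinRun.nil (r (b+1)))
      have hid : (w.drop a).take (b + 1 - a) = (w.drop a).take (b - a) ++ [w.get ⟨b, hblt⟩] := by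
        have h1 : b - a < (w.drop a).length := by rw [List.length_drop]; omega
        have h2 : b + 1 - a = (b - a) + 1 := by omega
        rw [h2, List.take_succ, List.getElem?_eq_getElem h1]
        have hab' : a + (b - a) = b := by omega
        simp [List.getElem_drop, hab']
      refine ⟨β ++ T.out (r b) (w.get ⟨b, hblt⟩) (r (b+1)), ?_, ?_⟩
      · rw [hid]; exact hβ.append_run hstep
      · rw [List.length_append, cum_succ]
        have : (T.stepOut w r b).length = (T.out (r b) (w.get ⟨b, hblt⟩) (r (b+1))).length := by
          rw [stepOut, dif_pos hblt]
        omega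

lemma FinRun.to_run {T : NT A B} {p : T.Q} {w : List A} {α : List B} {q : T.Q}
    (h : T.FinRun p w α q) :
    ∃ r : ℕ → T.Q, T.RunOn w r ∧ r 0 = p ∧ r w.length = q ∧
      T.cum w r w.length = α.length := by
  induction h with
  | nil p => exact ⟨fun _ => p, fun i hi => absurd hi (by simp), rfl, rfl, rfl⟩
  | @cons p p' q'' a u α ht _ ih =>
      obtain ⟨r, hr, h0, hend, hcum⟩ := ih
      refine ⟨fun i => match i with | 0 => p | (j+1) => r j, ?_, rfl, hend, ?_⟩
      · intro i hi
        match i with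
        | 0 => simpa [h0] using ht
        | (j+1) =>
            have hj : j < u.length := by simpa using hi
            simpa using hr j hj
      · show T.cum (a :: u) _ (u.length + 1) = _
        rw [cum_cons]
        have h1 : T.cum u (fun j => r j) u.length = α.length := hcum
        have h2 : T.stepOut (a :: u) (fun i => match i with | 0 => p | (j+1) => r j) 0
            = T.out p a (r 0) := by
          rw [stepOut, dif_pos (by simp)]
          rfl
        rw [h2, h0]
        simp [h1]


end NT


namespace NT
variable {A B : Type}

lemma powList_succ {β : Type} (v : List β) (n : ℕ) : powList v (n+1) = v ++ powList v n := by
  simp [powList, List.replicate_succ]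

lemma powList_length {β : Type} (v : List β) (n : ℕ) :
    (powList v n).length = n * v.length := by
  induction n with
  | zero => simp [powList]
  | succ n ih => rw [powList_succ, List.length_append, ih]; ring

lemma FinRun.pow {T : NT A B} {q : T.Q} {u : List A} {α : List B}
    (h : T.FinRun q u α q) : ∀ n, T.FinRun q (powList u n) (powList α n) q
  | 0 => FinRun.nil q
  | n+1 => by rw [powList_succ, powList_succ]; exact h.append_run (h.pow n)

lemma stepOut_le [Fintype A] {T : NT A B} {w : List A} {r : ℕ → T.Q} (i : ℕ) :
    (T.stepOut w r i).length ≤ T.bigM := by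
  rw [stepOut]
  split
  next h =>
    exact le_trans (Finset.le_sup (f := fun p : T.Q × A × T.Q => (T.out p.1 p.2.1 p.2.2).length)
      (Finset.mem_univ (r i, w.get ⟨i, h⟩, r (i+1)))) (le_max_right _ _)
  next h => exact Nat.zero_le _

lemma final_shift {T : NT A B} {ρ σ : ℕ → T.Q} {n : ℕ}
    (h : ∀ i, ρ (n + i) = σ i) (hf : T.Final σ) : T.Final ρ := by
  intro i
  obtain ⟨j, hj, hjF⟩ := hf i
  exact ⟨n + j, by omega, by rw [h j]; exact hjF⟩

def glueSeq {Q : Type} (n : ℕ) (r σ : ℕ → Q) : ℕ → Q :=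
  fun i => if i < n then r i else σ (i - n)

lemma glueSeq_zero {Q : Type} (n : ℕ) (r σ : ℕ → Q) (h : σ 0 = r n) :
    glueSeq n r σ 0 = r 0 := by
  unfold glueSeq
  split
  · rfl
  · have hn : n = 0 := by omega
    subst hn; simpa using h

lemma glueSeq_shift {Q : Type} (n : ℕ) (r σ : ℕ → Q) :
    ∀ i, glueSeq n r σ (n + i) = σ i := by
  intro i
  unfold glueSeq
  rw [if_neg (by omega)]
  congr 1
  omega

lemma glue_isRun {T : NT A B} {w : List A} {r : ℕ → T.Q} (hr : T.RunOn w r)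
    {x : ℕ → A} {σ : ℕ → T.Q} (hσ : T.IsRun x σ) (h0 : σ 0 = r w.length) :
    T.IsRun (listPrepend w x) (glueSeq w.length r σ) := by
  intro i
  by_cases hi : i < w.length
  · have hx : listPrepend w x i = w.get ⟨i, hi⟩ := dif_pos hi
    have h1 : glueSeq w.length r σ i = r i := if_pos hi
    have h2 : glueSeq w.length r σ (i+1) = r (i+1) := by
      unfold glueSeq
      split
      · rfl
      · have he : i + 1 = w.length := by omega
        rw [he, Nat.sub_self]
        exact h0
    rw [hx, h1, h2]
    exact hr i hi
  · have hx : listPrepend w x i = x (i - w.length) := dif_neg hi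
    have h1 : glueSeq w.length r σ i = σ (i - w.length) := if_neg hi
    have h2 : glueSeq w.length r σ (i+1) = σ (i - w.length + 1) := by
      unfold glueSeq
      rw [if_neg (by omega)]
      congr 1
      omega
    rw [hx, h1, h2]
    exact hσ (i - w.length)

lemma final_from {T : NT A B} (hTr : T.Trim) (q : T.Q) :
    ∃ (z : ℕ → A) (σ : ℕ → T.Q), σ 0 = q ∧ T.IsRun z σ ∧ T.Final σ := by
  obtain ⟨x, ρ, ⟨hrun, _, hfin⟩, k, hk⟩ := hTr q
  refine ⟨fun i => x (k+i), fun i => ρ (k+i), by simpa using hk, fun i => hrun (k+i), ?_⟩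
  intro i
  obtain ⟨j, hj, hF⟩ := hfin (k+i)
  refine ⟨j - k, by omega, ?_⟩
  have hkj : k + (j - k) = j := by omega
  show ρ (k + (j - k)) ∈ T.F
  rw [hkj]
  exact hF

lemma initial_unique {T : NT A B} (hU : T.Unambiguous) (hTr : T.Trim)
    {w : List A} {q p₁ p₂ : T.Q} {α₁ α₂ : List B}
    (h1I : p₁ ∈ T.I) (h2I : p₂ ∈ T.I)
    (h1 : T.FinRun p₁ w α₁ q) (h2 : T.FinRun p₂ w α₂ q) : p₁ = p₂ := by
  obtain ⟨z, σ, hσ0, hσrun, hσfin⟩ := final_from hTr q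
  obtain ⟨r₁, hr₁, h10, h1e, -⟩ := h1.to_run
  obtain ⟨r₂, hr₂, h20, h2e, -⟩ := h2.to_run
  have hacc : ∀ (r : ℕ → T.Q), T.RunOn w r → r w.length = q → r 0 ∈ T.I →
      T.Accepting (listPrepend w z) (glueSeq w.length r σ) := by
    intro r hr he hI
    refine ⟨glue_isRun hr hσrun (by rw [hσ0, he]), ?_, ?_⟩
    · rw [glueSeq_zero _ _ _ (by rw [hσ0, he])]; exact hI
    · exact final_shift (glueSeq_shift _ _ _) hσfin
  have heq := hU _ _ _ (hacc r₁ hr₁ h1e (by rw [h10]; exact h1I))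
    (hacc r₂ hr₂ h2e (by rw [h20]; exact h2I))
  have h0 := congrFun heq 0
  rw [glueSeq_zero _ _ _ (by rw [hσ0, h1e]), glueSeq_zero _ _ _ (by rw [hσ0, h2e]),
    h10, h20] at h0
  exact h0

lemma exists_repeat {T : NT A B} {C : Set T.Q} (hne : C.Nonempty)
    (R : T.Q → ℕ → T.Q) :
    ∃ a b, a < b ∧ b ≤ Fintype.card T.Q ^ Fintype.card T.Q ∧ ∀ q ∈ C, R q a = R q b := by
  classical
  haveI : Nonempty T.Q := ⟨hne.some⟩
  letI instC : Fintype ↥C := C.toFinite.fintype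
  set K := Fintype.card T.Q ^ Fintype.card T.Q with hK
  have hcard : Fintype.card (↥C → T.Q) ≤ K := by
    rw [Fintype.card_fun]
    exact Nat.pow_le_pow_right Fintype.card_pos
      (Fintype.card_le_of_injective _ Subtype.val_injective)
  obtain ⟨i, j, hij, heq⟩ := Fintype.exists_ne_map_eq_of_card_lt
    (fun t : Fin (K+1) => fun qc : ↥C => R qc.1 (t : ℕ)) (by rw [Fintype.card_fin]; omega)
  have hijn : (i:ℕ) ≠ (j:ℕ) := fun h => hij (Fin.ext h)
  rcases hijn.lt_or_gt with h | h
  · exact ⟨i, j, h, Nat.lt_succ_iff.mp j.isLt, fun q hq => congrFun heq ⟨q, hq⟩⟩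
  · exact ⟨j, i, h, Nat.lt_succ_iff.mp i.isLt, fun q hq => (congrFun heq ⟨q, hq⟩).symm⟩

lemma crossing [Fintype A] {T : NT A B} {C : Set T.Q} (hne : C.Nonempty)
    (R : T.Q → ℕ → T.Q) (w : List A) {p₀ q₀ : T.Q}
    (gap : T.cum w (R q₀) w.length + T.Omega < T.cum w (R p₀) w.length) :
    ∃ t t', t < t' ∧ t' ≤ w.length ∧ (∀ q ∈ C, R q t = R q t') ∧
      ((T.cum w (R p₀) t : ℤ) - T.cum w (R q₀) t ≠
        (T.cum w (R p₀) t' : ℤ) - T.cum w (R q₀) t') := by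
  classical
  haveI : Nonempty T.Q := ⟨hne.some⟩
  letI instC : Fintype ↥C := C.toFinite.fintype
  set K := Fintype.card T.Q ^ Fintype.card T.Q with hK
  set M := T.bigM with hM
  set d : ℕ → ℤ := fun t => (T.cum w (R p₀) t : ℤ) - T.cum w (R q₀) t with hd
  have hstep : ∀ t, d (t+1) ≤ d t + M ∧ d t ≤ d (t+1) + M := by
    intro t
    have e1 := T.cum_succ (w := w) (r := R p₀) t
    have e2 := T.cum_succ (w := w) (r := R q₀) t
    have b1 := T.stepOut_le (w := w) (r := R p₀) t
    have b2 := T.stepOut_le (w := w) (r := R q₀) t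
    simp only [hd]
    omega
  have hend : (K : ℤ) * M < d w.length := by
    have hΩ : T.Omega = M * K := rfl
    rw [hΩ] at gap
    have hcast : ((M * K : ℕ) : ℤ) = (K:ℤ) * M := by push_cast; ring
    simp only [hd]
    omega
  have hwit : ∀ j : Fin (K+1), ((j:ℕ):ℤ) * M < d w.length := by
    intro j
    refine lt_of_le_of_lt ?_ hend
    have hj : ((j:ℕ) : ℤ) ≤ K := by exact_mod_cast Nat.lt_succ_iff.mp j.isLt
    exact mul_le_mul_of_nonneg_right hj (by positivity)
  have hexists : ∀ j : Fin (K+1), ∃ t, ((j:ℕ) : ℤ) * M < d t := fun j => ⟨w.length, hwit j⟩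
  set s : Fin (K+1) → ℕ := fun j => Nat.find (hexists j) with hs
  have hs_le : ∀ j, s j ≤ w.length := fun j => Nat.find_le (hwit j)
  have hs_pos : ∀ j, 0 < s j := by
    intro j
    by_contra hcon
    push_neg at hcon
    have h0 : s j = 0 := by omega
    have hspec := Nat.find_spec (hexists j)
    rw [show Nat.find (hexists j) = s j from rfl, h0] at hspec
    have hd0 : d 0 = 0 := by simp [hd, cum_zero]
    rw [hd0] at hspec
    have : (0:ℤ) ≤ ((j:ℕ):ℤ) * M := by positivity
    omega
  have hupper : ∀ j : Fin (K+1), d (s j) ≤ ((j:ℕ):ℤ) * M + M := by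
    intro j
    have h1 : ¬ (((j:ℕ):ℤ) * M < d (s j - 1)) := by
      have hlt : s j - 1 < s j := by have := hs_pos j; omega
      exact Nat.find_min (hexists j) hlt
    have h2 := (hstep (s j - 1)).1
    have h3 : s j - 1 + 1 = s j := by have := hs_pos j; omega
    rw [h3] at h2
    omega
  have hlower : ∀ j : Fin (K+1), ((j:ℕ):ℤ) * M < d (s j) := fun j => Nat.find_spec (hexists j)
  have hcard : Fintype.card (↥C → T.Q) ≤ K := by
    rw [Fintype.card_fun]
    exact Nat.pow_le_pow_right Fintype.card_pos
      (Fintype.card_le_of_injective _ Subtype.val_injective)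
  obtain ⟨i, j, hij, heq⟩ := Fintype.exists_ne_map_eq_of_card_lt
    (fun t : Fin (K+1) => fun qc : ↥C => R qc.1 (s t)) (by rw [Fintype.card_fin]; omega)
  have hdne : d (s i) ≠ d (s j) := by
    have hijn : (i:ℕ) ≠ (j:ℕ) := fun h => hij (Fin.ext h)
    have hMpos : (0:ℤ) < M := by
      have : (10:ℕ) ≤ T.bigM := le_max_left _ _
      rw [hM]
      exact_mod_cast lt_of_lt_of_le (by norm_num) this
    rcases hijn.lt_or_gt with h | h
    · have hui := hupper i
      have hlj := hlower j
      have hle : ((i:ℕ):ℤ) * M + M ≤ ((j:ℕ):ℤ) * M := by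
        have hij1 : ((i:ℕ):ℤ) + 1 ≤ ((j:ℕ):ℤ) := by exact_mod_cast h
        nlinarith
      omega
    · have hui := hupper j
      have hlj := hlower i
      have hle : ((j:ℕ):ℤ) * M + M ≤ ((i:ℕ):ℤ) * M := by
        have hij1 : ((j:ℕ):ℤ) + 1 ≤ ((i:ℕ):ℤ) := by exact_mod_cast h
        nlinarith
      omega
  have hsne : s i ≠ s j := fun h => hdne (by rw [h])
  rcases hsne.lt_or_gt with h | h
  · exact ⟨s i, s j, h, hs_le j, fun q hq => congrFun heq ⟨q, hq⟩, by simpa [hd] using hdne⟩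
  · exact ⟨s j, s i, h, hs_le i, fun q hq => (congrFun heq ⟨q, hq⟩).symm,
      by simpa [hd] using hdne.symm⟩

end NT


namespace NT
variable {A B : Type}

lemma shortenReach {T : NT A B} {C : Set T.Q} (hne : C.Nonempty) :
    ∀ (n : ℕ) (w : List A) (g h : T.Q → T.Q), w.length ≤ n →
    (∀ q ∈ C, ∃ β, T.FinRun (g q) w β (h q)) →
    ∃ w' : List A, w'.length ≤ Fintype.card T.Q ^ Fintype.card T.Q ∧
      (∀ q ∈ C, ∃ β, T.FinRun (g q) w' β (h q)) := by
  intro n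
  induction n with
  | zero => exact fun w g h hlen hreach => ⟨w, by omega, hreach⟩
  | succ n ih =>
      intro w g h hlen hreach
      by_cases hK : w.length ≤ Fintype.card T.Q ^ Fintype.card T.Q
      · exact ⟨w, hK, hreach⟩
      push_neg at hK
      classical
      have hch : ∀ q : T.Q, ∃ r : ℕ → T.Q, q ∈ C →
          T.RunOn w r ∧ r 0 = g q ∧ r w.length = h q := by
        intro q
        by_cases hq : q ∈ C
        · obtain ⟨β, hβ⟩ := hreach q hq
          obtain ⟨r, h1, h2, h3, -⟩ := hβ.to_run
          exact ⟨r, fun _ => ⟨h1, h2, h3⟩⟩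
        · exact ⟨fun _ => q, fun hq' => absurd hq' hq⟩
      choose R hR using hch
      obtain ⟨a, b, hab, hbK, habeq⟩ := exists_repeat hne R
      have hblt : b < w.length := lt_of_le_of_lt hbK hK
      have hreach' : ∀ q ∈ C, ∃ β, T.FinRun (g q) (w.take a ++ w.drop b) β (h q) := by
        intro q hq
        obtain ⟨hrun, h0, hend⟩ := hR q hq
        obtain ⟨β₁, hβ₁, -⟩ := hrun.seg (Nat.zero_le a) (by omega)
        obtain ⟨β₂, hβ₂, -⟩ := hrun.seg (le_of_lt hblt) (le_refl w.length)
        rw [List.drop_zero, Nat.sub_zero, h0, habeq q hq] at hβ₁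
        have hdr : (w.drop b).take (w.length - b) = w.drop b := by
          rw [← List.length_drop]
          exact List.take_length
        rw [hdr, hend] at hβ₂
        exact ⟨β₁ ++ β₂, hβ₁.append_run hβ₂⟩
      have hlen' : (w.take a ++ w.drop b).length ≤ n := by
        rw [List.length_append, List.length_take, List.length_drop]
        omega
      exact ih _ g h hlen' hreach'

lemma shortenLoop {T : NT A B} {C : Set T.Q} (hne : C.Nonempty)
    {p₀ q₀ : T.Q} (hp₀ : p₀ ∈ C) (hq₀ : q₀ ∈ C) :
    ∀ (n : ℕ) (v : List A) (g : T.Q → T.Q) (γ : T.Q → List B), v.length ≤ n →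
    (∀ q ∈ C, T.FinRun (g q) v (γ q) (g q)) → v ≠ [] →
    (γ p₀).length ≠ (γ q₀).length →
    ∃ (x z v' : List A) (g' : T.Q → T.Q) (γ' : T.Q → List B),
      (∀ q ∈ C, (∃ β, T.FinRun (g q) x β (g' q)) ∧ T.FinRun (g' q) v' (γ' q) (g' q) ∧
        (∃ β, T.FinRun (g' q) z β (g q))) ∧
      v' ≠ [] ∧ v'.length ≤ Fintype.card T.Q ^ Fintype.card T.Q ∧
      (γ' p₀).length ≠ (γ' q₀).length := by
  intro n
  induction n with
  | zero =>
      intro v g γ hlen hloop hvne hgap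
      exact absurd (List.length_eq_zero_iff.mp (Nat.le_zero.mp hlen)) hvne
  | succ n ih =>
      intro v g γ hlen hloop hvne hgap
      by_cases hK : v.length ≤ Fintype.card T.Q ^ Fintype.card T.Q
      · exact ⟨[], [], v, g, γ,
          fun q hq => ⟨⟨[], FinRun.nil _⟩, hloop q hq, ⟨[], FinRun.nil _⟩⟩, hvne, hK, hgap⟩
      push_neg at hK
      classical
      have hch : ∀ q : T.Q, ∃ r : ℕ → T.Q, q ∈ C →
          T.RunOn v r ∧ r 0 = g q ∧ r v.length = g q ∧
            T.cum v r v.length = (γ q).length := by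
        intro q
        by_cases hq : q ∈ C
        · obtain ⟨r, h1, h2, h3, h4⟩ := (hloop q hq).to_run
          exact ⟨r, fun _ => ⟨h1, h2, h3, h4⟩⟩
        · exact ⟨fun _ => q, fun hq' => absurd hq' hq⟩
      choose R hR using hch
      obtain ⟨a, b, hab, hbK, habeq⟩ := exists_repeat hne R
      have hblt : b < v.length := lt_of_le_of_lt hbK hK
      have hsegs : ∀ q : T.Q, ∃ (β₁ β₂ β₃ : List B), q ∈ C →
          (T.FinRun (g q) (v.take a) β₁ (R q a) ∧ β₁.length = T.cum v (R q) a) ∧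
          (T.FinRun (R q a) ((v.drop a).take (b - a)) β₂ (R q a) ∧
            β₂.length + T.cum v (R q) a = T.cum v (R q) b) ∧
          (T.FinRun (R q a) (v.drop b) β₃ (g q) ∧
            β₃.length + T.cum v (R q) b = (γ q).length) := by
        intro q
        by_cases hq : q ∈ C
        · obtain ⟨hrun, h0, hend, hcum⟩ := hR q hq
          obtain ⟨β₁, hβ₁, hl₁⟩ := hrun.seg (Nat.zero_le a) (by omega)
          obtain ⟨β₂, hβ₂, hl₂⟩ := hrun.seg (le_of_lt hab) (le_of_lt hblt)
          obtain ⟨β₃, hβ₃, hl₃⟩ := hrun.seg (le_of_lt hblt) (le_refl v.length)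
          rw [List.drop_zero, Nat.sub_zero, h0] at hβ₁
          rw [cum_zero] at hl₁
          rw [← habeq q hq] at hβ₂
          have hdr : (v.drop b).take (v.length - b) = v.drop b := by
            rw [← List.length_drop]
            exact List.take_length
          rw [hdr, hend, ← habeq q hq] at hβ₃
          rw [hcum] at hl₃
          exact ⟨β₁, β₂, β₃, fun _ => ⟨⟨hβ₁, by omega⟩, ⟨hβ₂, hl₂⟩, ⟨hβ₃, hl₃⟩⟩⟩
        · exact ⟨[], [], [], fun hq' => absurd hq' hq⟩
      choose B₁ B₂ B₃ hB using hsegs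
      by_cases hcase : (B₂ p₀).length = (B₂ q₀).length
      · have hloop' : ∀ q ∈ C, T.FinRun (g q) (v.take a ++ v.drop b) (B₁ q ++ B₃ q) (g q) := by
          intro q hq
          obtain ⟨⟨h1, -⟩, -, ⟨h3, -⟩⟩ := hB q hq
          exact h1.append_run h3
        have hlen' : (v.take a ++ v.drop b).length ≤ n := by
          rw [List.length_append, List.length_take, List.length_drop]
          omega
        have hvne' : v.take a ++ v.drop b ≠ [] := by
          apply List.ne_nil_of_length_pos
          rw [List.length_append, List.length_take, List.length_drop]
          omega
        have hgap' : (B₁ p₀ ++ B₃ p₀).length ≠ (B₁ q₀ ++ B₃ q₀).length := by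
          obtain ⟨⟨-, e1p⟩, ⟨-, e2p⟩, ⟨-, e3p⟩⟩ := hB p₀ hp₀
          obtain ⟨⟨-, e1q⟩, ⟨-, e2q⟩, ⟨-, e3q⟩⟩ := hB q₀ hq₀
          rw [List.length_append, List.length_append]
          omega
        exact ih _ g _ hlen' hloop' hvne' hgap'
      · refine ⟨v.take a, v.drop b, (v.drop a).take (b - a), fun q => R q a, B₂, ?_, ?_, ?_, hcase⟩
        · intro q hq
          obtain ⟨⟨h1, -⟩, ⟨h2, -⟩, ⟨h3, -⟩⟩ := hB q hq
          exact ⟨⟨B₁ q, h1⟩, h2, ⟨B₃ q, h3⟩⟩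
        · apply List.ne_nil_of_length_pos
          rw [List.length_take, List.length_drop]
          omega
        · rw [List.length_take, List.length_drop]
          omega

lemma exists_advData {T : NT A B} (C : Set T.Q) (val : T.Q → List B) {p₀ : T.Q}
    (hp₀ : p₀ ∈ C) : ∃ com adv, T.AdvData C val com adv := by
  classical
  set P : ℕ → Prop := fun m => ∀ q ∈ C, (val p₀).take m <+: val q with hPdef
  have hP0 : P 0 := fun q hq => by simp
  set m := Nat.findGreatest P (val p₀).length with hm
  have hPm : P m := Nat.findGreatest_spec (Nat.zero_le _) hP0
  have hmle : m ≤ (val p₀).length := Nat.findGreatest_le _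
  refine ⟨(val p₀).take m, fun q => (val q).drop m, ?_, ?_⟩
  · intro q hq
    have hpre := hPm q hq
    have hlen : ((val p₀).take m).length = m := by rw [List.length_take]; omega
    have heq : (val p₀).take m = (val q).take m := by
      rw [List.prefix_iff_eq_take] at hpre
      rw [hpre, hlen]
    rw [heq]
    exact (List.take_append_drop m (val q)).symm
  · intro c hc
    have hcp := hc p₀ hp₀
    have hclen : c.length ≤ (val p₀).length := hcp.length_le
    have hceq : c = (val p₀).take c.length := List.prefix_iff_eq_take.mp hcp
    have hPc : P c.length := by
      intro q hq
      rw [← hceq]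
      exact hc q hq
    have hcm : c.length ≤ m := Nat.le_findGreatest hclen hPc
    rw [hceq]
    have htp := List.take_prefix c.length ((val p₀).take m)
    rw [List.take_take, min_eq_left hcm] at htp
    exact htp

end NT

/-- Pumping characterization of separable compatible sets. -/
theorem separable_characterization
    {A B : Type} [Fintype A] [Fintype B]
    (T : NT A B) (f : (ℕ → A) → Option (ℕ → B))
    (hU : T.Unambiguous) (hCl : T.Clean) (hTr : T.Trim)
    (hT : T.Computes f) (hcont : ContinuousPartial f)
    (C : Set T.Q) (hC : T.Compatible C) :
    T.Separable C ↔
    ∃ (iF lF : T.Q → T.Q) (u u' u'' : List A) (α α' α'' : T.Q → List B),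
      (∀ q ∈ C, iF q ∈ T.I ∧
        T.FinRun (iF q) u (α q) (lF q) ∧
        T.FinRun (lF q) u' (α' q) (lF q) ∧
        T.FinRun (lF q) u'' (α'' q) q) ∧
      u' ≠ [] ∧
      u.length ≤ Fintype.card T.Q ^ Fintype.card T.Q ∧
      u'.length ≤ Fintype.card T.Q ^ Fintype.card T.Q ∧
      u''.length ≤ Fintype.card T.Q ^ Fintype.card T.Q ∧
      ∃ p ∈ C, ∃ q ∈ C, (α' p).length ≠ (α' q).length := by
  classical
  constructor
  · -- forward direction
    rintro ⟨J, w, pre, val, com, adv, ⟨hJI, ⟨⟨hCompJ, hCompC, hrunval, huniq⟩, hsurj⟩⟩,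
      ⟨hadv1, hadv2⟩, p₀, hp₀, q₀, hq₀, hgap⟩
    have hCne : C.Nonempty := ⟨p₀, hp₀⟩
    have hch : ∀ q : T.Q, ∃ r : ℕ → T.Q, q ∈ C →
        T.RunOn w r ∧ r 0 = pre q ∧ r w.length = q ∧
          T.cum w r w.length = (val q).length := by
      intro q
      by_cases hq : q ∈ C
      · obtain ⟨r, h1, h2, h3, h4⟩ := (hrunval q hq).2.to_run
        exact ⟨r, fun _ => ⟨h1, h2, h3, h4⟩⟩
      · exact ⟨fun _ => q, fun hq' => absurd hq' hq⟩
    choose R hR using hch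
    have hgap' : T.cum w (R q₀) w.length + T.Omega < T.cum w (R p₀) w.length := by
      have l1 := (hR p₀ hp₀).2.2.2
      have l2 := (hR q₀ hq₀).2.2.2
      have l3 : (val p₀).length = com.length + (adv p₀).length := by
        rw [hadv1 p₀ hp₀, List.length_append]
      have l4 : (val q₀).length = com.length + (adv q₀).length := by
        rw [hadv1 q₀ hq₀, List.length_append]
      omega
    obtain ⟨t, t', htt', ht'le, hteq, hdne⟩ := NT.crossing hCne R w hgap'
    have hsegs : ∀ q : T.Q, ∃ (β₁ β₂ β₃ : List B), q ∈ C →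
        (T.FinRun (pre q) (w.take t) β₁ (R q t)) ∧
        (T.FinRun (R q t) ((w.drop t).take (t' - t)) β₂ (R q t) ∧
          β₂.length + T.cum w (R q) t = T.cum w (R q) t') ∧
        (T.FinRun (R q t) (w.drop t') β₃ q) := by
      intro q
      by_cases hq : q ∈ C
      · obtain ⟨hrun, h0, hend, -⟩ := hR q hq
        obtain ⟨β₁, hβ₁, -⟩ := hrun.seg (Nat.zero_le t) (by omega)
        obtain ⟨β₂, hβ₂, hl₂⟩ := hrun.seg (le_of_lt htt') ht'le
        obtain ⟨β₃, hβ₃, -⟩ := hrun.seg ht'le (le_refl w.length)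
        rw [List.drop_zero, Nat.sub_zero, h0] at hβ₁
        rw [← hteq q hq] at hβ₂
        have hdr : (w.drop t').take (w.length - t') = w.drop t' := by
          rw [← List.length_drop]
          exact List.take_length
        rw [hdr, hend, ← hteq q hq] at hβ₃
        exact ⟨β₁, β₂, β₃, fun _ => ⟨hβ₁, ⟨hβ₂, hl₂⟩, hβ₃⟩⟩
      · exact ⟨[], [], [], fun hq' => absurd hq' hq⟩
    choose B₁ B₂ B₃ hB using hsegs
    have hgapB₂ : (B₂ p₀).length ≠ (B₂ q₀).length := by
      obtain ⟨-, ⟨-, e2p⟩, -⟩ := hB p₀ hp₀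
      obtain ⟨-, ⟨-, e2q⟩, -⟩ := hB q₀ hq₀
      intro hEq
      exact hdne (by omega)
    have hvne : (w.drop t).take (t' - t) ≠ [] := by
      apply List.ne_nil_of_length_pos
      rw [List.length_take, List.length_drop]
      omega
    obtain ⟨x, z, v', g', γ', hxs, hv'ne, hv'K, hγgap⟩ :=
      NT.shortenLoop hCne hp₀ hq₀ (((w.drop t).take (t' - t)).length)
        ((w.drop t).take (t' - t)) (fun q => R q t) B₂ le_rfl
        (fun q hq => (hB q hq).2.1.1) hvne hgapB₂
    have hreach1 : ∀ q ∈ C, ∃ β, T.FinRun (pre q) (w.take t ++ x) β (g' q) := by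
      intro q hq
      obtain ⟨βx, hβx⟩ := (hxs q hq).1
      exact ⟨B₁ q ++ βx, ((hB q hq).1).append_run hβx⟩
    obtain ⟨u, huK, hureach⟩ := NT.shortenReach hCne ((w.take t ++ x).length)
      (w.take t ++ x) pre g' le_rfl hreach1
    have hreach2 : ∀ q ∈ C, ∃ β, T.FinRun (g' q) (z ++ w.drop t') β ((fun q => q) q) := by
      intro q hq
      obtain ⟨βz, hβz⟩ := (hxs q hq).2.2
      exact ⟨βz ++ B₃ q, hβz.append_run ((hB q hq).2.2)⟩
    obtain ⟨u'', hu''K, hu''reach⟩ := NT.shortenReach hCne ((z ++ w.drop t').length)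
      (z ++ w.drop t') g' (fun q => q) le_rfl hreach2
    have hαex : ∀ q : T.Q, ∃ β : List B, q ∈ C → T.FinRun (pre q) u β (g' q) := by
      intro q
      by_cases hq : q ∈ C
      · obtain ⟨β, hβ⟩ := hureach q hq
        exact ⟨β, fun _ => hβ⟩
      · exact ⟨[], fun hq' => absurd hq' hq⟩
    choose αf hαf using hαex
    have hα''ex : ∀ q : T.Q, ∃ β : List B, q ∈ C → T.FinRun (g' q) u'' β q := by
      intro q
      by_cases hq : q ∈ C
      · obtain ⟨β, hβ⟩ := hu''reach q hq
        exact ⟨β, fun _ => hβ⟩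
      · exact ⟨[], fun hq' => absurd hq' hq⟩
    choose α''f hα''f using hα''ex
    refine ⟨pre, g', u, v', u'', αf, γ', α''f, ?_, hv'ne, huK, hv'K, hu''K,
      p₀, hp₀, q₀, hq₀, hγgap⟩
    intro q hq
    exact ⟨hJI (hrunval q hq).1, hαf q hq, (hxs q hq).2.1, hα''f q hq⟩
  · -- backward direction
    rintro ⟨iF, lF, u, u', u'', α, α', α'', hruns, hu'ne, -, -, -, p₁, hp₁, q₁, hq₁, hne'⟩
    have key : ∀ p₀ q₀ : T.Q, p₀ ∈ C → q₀ ∈ C → (α' q₀).length < (α' p₀).length →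
        T.Separable C := by
      intro p₀ q₀ hp₀ hq₀ hlt
      set N := T.Omega + (α q₀).length + (α'' q₀).length + 1 with hN
      set w := u ++ (powList u' N ++ u'') with hw
      set val : T.Q → List B := fun q => α q ++ (powList (α' q) N ++ α'' q) with hval
      have hwrun : ∀ q ∈ C, T.FinRun (iF q) w (val q) q := by
        intro q hq
        exact (hruns q hq).2.1.append_run
          (((hruns q hq).2.2.1.pow N).append_run (hruns q hq).2.2.2)
      obtain ⟨x₀, ρ, hρ, qs, hqs, hfin⟩ := id hC
      set J := iF '' C with hJ
      have hJsub : J ⊆ T.I := by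
        rintro j ⟨q, hqC, rfl⟩
        exact (hruns q hqC).1
      set g : T.Q → T.Q := fun j => if j = iF qs then qs
        else (if h : ∃ q, q ∈ C ∧ iF q = j then h.choose else j) with hg
      have hgqs : g (iF qs) = qs := by simp [hg]
      have hgmem : ∀ j ∈ J, g j ∈ C ∧ iF (g j) = j := by
        intro j hj
        by_cases hj' : j = iF qs
        · subst hj'
          rw [hgqs]
          exact ⟨hqs, rfl⟩
        · obtain ⟨q, hqC, hqj⟩ := hj
          have hex : ∃ q, q ∈ C ∧ iF q = j := ⟨q, hqC, hqj⟩
          have hgj : g j = hex.choose := by simp [hg, hj', dif_pos hex]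
          rw [hgj]
          exact hex.choose_spec
      have hbuild : ∀ j : T.Q, ∃ σ : ℕ → T.Q, j ∈ J →
          (σ 0 = j ∧ T.IsRun (listPrepend w x₀) σ ∧ (T.Final (ρ (g j)) → T.Final σ)) := by
        intro j
        by_cases hj : j ∈ J
        · obtain ⟨hgC, hgj⟩ := hgmem j hj
          obtain ⟨r, hrun, h0, hend, -⟩ := (hwrun (g j) hgC).to_run
          have hρ0 : ρ (g j) 0 = r w.length := by
            rw [hend]
            exact (hρ (g j) hgC).1
          refine ⟨NT.glueSeq w.length r (ρ (g j)), fun _ => ⟨?_, ?_, ?_⟩⟩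
          · rw [NT.glueSeq_zero _ _ _ hρ0, h0, hgj]
          · exact NT.glue_isRun hrun (hρ (g j) hgC).2 hρ0
          · exact fun hf => NT.final_shift (NT.glueSeq_shift _ _ _) hf
        · exact ⟨fun _ => j, fun hj' => absurd hj' hj⟩
      choose ρJ hρJ using hbuild
      have hCompJ : T.Compatible J := by
        refine ⟨listPrepend w x₀, ρJ, fun j hj => ⟨(hρJ j hj).1, (hρJ j hj).2.1⟩,
          iF qs, ⟨qs, hqs, rfl⟩, ?_⟩
        have hmem : iF qs ∈ J := ⟨qs, hqs, rfl⟩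
        apply (hρJ _ hmem).2.2
        rw [hgqs]
        exact hfin
      obtain ⟨com, adv, hAdv⟩ := T.exists_advData C val hp₀
      have hlenval : ∀ q : T.Q, (val q).length =
          (α q).length + N * (α' q).length + (α'' q).length := by
        intro q
        simp only [hval, List.length_append, NT.powList_length]
        ring
      have hNgap : (val q₀).length + T.Omega < (val p₀).length := by
        have h1 := hlenval p₀
        have h2 := hlenval q₀
        have h3 : N * ((α' q₀).length + 1) ≤ N * (α' p₀).length :=
          Nat.mul_le_mul_left N hlt
        rw [Nat.mul_succ] at h3
        have hNval : N = T.Omega + (α q₀).length + (α'' q₀).length + 1 := hN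
        set X := N * (α' q₀).length with hX
        set Y := N * (α' p₀).length with hY
        omega
      have hgapAdv : (adv q₀).length + T.Omega < (adv p₀).length := by
        have h1 := hAdv.1 p₀ hp₀
        have h2 := hAdv.1 q₀ hq₀
        have l1 : (val p₀).length = com.length + (adv p₀).length := by
          rw [h1, List.length_append]
        have l2 : (val q₀).length = com.length + (adv q₀).length := by
          rw [h2, List.length_append]
        omega
      refine ⟨J, w, iF, val, com, adv, ⟨hJsub, ⟨⟨hCompJ, hC, ?_, ?_⟩, ?_⟩⟩, hAdv,
        p₀, hp₀, q₀, hq₀, hgapAdv⟩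
      · exact fun q hq => ⟨⟨q, hq, rfl⟩, hwrun q hq⟩
      · intro q hq p hp hex
        obtain ⟨β, hβ⟩ := hex
        exact NT.initial_unique hU hTr (hJsub hp) (hJsub ⟨q, hq, rfl⟩) hβ (hwrun q hq)
      · rintro p ⟨q, hq, rfl⟩
        exact ⟨q, hq, rfl⟩
    rcases hne'.lt_or_gt with h | h
    · exact key q₁ p₁ hq₁ hp₁ h
    · exact key p₁ q₁ hp₁ hq₁ h
end

section
/- Let T be an unambiguous, clean and trim 1-nT computing a continuous partial function f : A^ω ⇀ B^ω. Then for every compatible set C there exists a function end_C : C → B^ω such that for every initial step (J,u,C) and all p,q ∈ C, val(p)·end_C(p) = val(q)·end_C(q) (as infinite words). -/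
namespace NT

variable {A B : Type}

/-- Shift of a sequence. -/
def shiftSeq {α : Type*} (g : ℕ → α) (k : ℕ) : ℕ → α := fun i => g (k + i)

theorem outPrefix_add (T : NT A B) (x : ℕ → A) (ρ : ℕ → T.Q) (m n : ℕ) :
    T.outPrefix x ρ (m + n) =
      T.outPrefix x ρ m ++ T.outPrefix (shiftSeq x m) (shiftSeq ρ m) n := by
  simp only [outPrefix, shiftSeq, List.range_add, List.map_append, List.map_map,
    List.flatten_append, Function.comp_def, List.flatten, Nat.add_assoc]

theorem outPrefix_prefix (T : NT A B) (x : ℕ → A) (ρ : ℕ → T.Q) {m n : ℕ} (h : m ≤ n) :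
    T.outPrefix x ρ m <+: T.outPrefix x ρ n := by
  obtain ⟨k, rfl⟩ := Nat.exists_eq_add_of_le h
  exact ⟨_, (T.outPrefix_add x ρ m k).symm⟩

theorem outPrefix_congr (T : NT A B) {x₁ x₂ : ℕ → A} {ρ₁ ρ₂ : ℕ → T.Q} {n : ℕ}
    (hx : ∀ i < n, x₁ i = x₂ i) (hρ : ∀ i ≤ n, ρ₁ i = ρ₂ i) :
    T.outPrefix x₁ ρ₁ n = T.outPrefix x₂ ρ₂ n := by
  unfold outPrefix
  congr 1
  apply List.map_congr_left
  intro a ha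
  rw [List.mem_range] at ha
  rw [hx a ha, hρ a ha.le, hρ (a+1) ha]

/-- The infinite output word of a run with infinite output. -/
noncomputable def outWord (T : NT A B) (x : ℕ → A) (ρ : ℕ → T.Q)
    (h : T.InfiniteOutput x ρ) : ℕ → B :=
  fun j => (T.outPrefix x ρ (h (j+1)).choose).get
    ⟨j, by have := (h (j+1)).choose_spec; omega⟩

theorem outPrefix_get_eq (T : NT A B) (x : ℕ → A) (ρ : ℕ → T.Q) {m n j : ℕ}
    (hm : j < (T.outPrefix x ρ m).length) (hn : j < (T.outPrefix x ρ n).length) :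
    (T.outPrefix x ρ m).get ⟨j, hm⟩ = (T.outPrefix x ρ n).get ⟨j, hn⟩ := by
  simp only [List.get_eq_getElem]
  rcases le_total m n with h | h
  · exact (T.outPrefix_prefix x ρ h).getElem hm
  · exact ((T.outPrefix_prefix x ρ h).getElem hn).symm

theorem outWord_spec (T : NT A B) (x : ℕ → A) (ρ : ℕ → T.Q)
    (h : T.InfiniteOutput x ρ) (n : ℕ) :
    PrefixOf (T.outPrefix x ρ n) (T.outWord x ρ h) := by
  intro j hj
  exact T.outPrefix_get_eq x ρ hj _

end NT

-- listPrepend / PrefixOf lemmas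

theorem listPrepend_left {B : Type} (l : List B) (y : ℕ → B) {i : ℕ} (h : i < l.length) :
    listPrepend l y i = l.get ⟨i, h⟩ := dif_pos h

theorem listPrepend_right {B : Type} (l : List B) (y : ℕ → B) (j : ℕ) :
    listPrepend l y (l.length + j) = y j := by
  unfold listPrepend
  rw [dif_neg (by omega)]
  congr 1
  omega

theorem listPrepend_nil {B : Type} (y : ℕ → B) : listPrepend [] y = y := by
  funext i
  unfold listPrepend
  rw [dif_neg (by simp)]
  simp

theorem listPrepend_cons_zero {B : Type} (a : B) (l : List B) (y : ℕ → B) :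
    listPrepend (a :: l) y 0 = a := by
  unfold listPrepend
  rw [dif_pos (by simp)]
  rfl

theorem listPrepend_cons_succ {B : Type} (a : B) (l : List B) (y : ℕ → B) (i : ℕ) :
    listPrepend (a :: l) y (i + 1) = listPrepend l y i := by
  unfold listPrepend
  by_cases h : i < l.length
  · rw [dif_pos (by simpa using Nat.succ_lt_succ h), dif_pos h]
    rfl
  · rw [dif_neg (by simpa using fun hh => h (Nat.lt_of_succ_lt_succ hh)), dif_neg h]
    congr 1
    simp

theorem PrefixOf.of_isPrefix {B : Type} {l l' : List B} {y : ℕ → B}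
    (h : l <+: l') (h' : PrefixOf l' y) : PrefixOf l y := by
  intro i hi
  rw [List.get_eq_getElem, h.getElem hi]
  exact h' i (hi.trans_le h.length_le)

theorem PrefixOf.append {B : Type} {l : List B} {Γ : ℕ → B} (δ : List B)
    (h : PrefixOf l Γ) : PrefixOf (δ ++ l) (listPrepend δ Γ) := by
  intro i hi
  rw [List.length_append] at hi
  by_cases hd : i < δ.length
  · rw [List.get_eq_getElem, List.getElem_append_left hd, listPrepend_left δ Γ hd]
    rfl
  · push_neg at hd
    rw [List.get_eq_getElem, List.getElem_append_right hd]
    have key := listPrepend_right δ Γ (i - δ.length)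
    rw [show δ.length + (i - δ.length) = i from by omega] at key
    rw [key]
    have := h (i - δ.length) (by omega)
    rw [List.get_eq_getElem] at this
    exact this

namespace NT

variable {A B : Type}

theorem outPrefix_one (T : NT A B) (x : ℕ → A) (ρ : ℕ → T.Q) :
    T.outPrefix x ρ 1 = T.out (ρ 0) (x 0) (ρ 1) := by
  simp [outPrefix, List.range_succ, List.flatten]

theorem FinRun.prepend {T : NT A B} {q0 : T.Q} {u : List A} {α : List B} {q : T.Q}
    (h : T.FinRun q0 u α q) (x : ℕ → A) (σ : ℕ → T.Q)
    (hσ : T.IsRun x σ) (h0 : σ 0 = q) :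
    ∃ ρ' : ℕ → T.Q, T.IsRun (listPrepend u x) ρ' ∧ ρ' 0 = q0 ∧
      (∀ i, ρ' (u.length + i) = σ i) ∧
      (∀ n, T.outPrefix (listPrepend u x) ρ' (u.length + n) =
        α ++ T.outPrefix x σ n) := by
  induction h with
  | nil q =>
    refine ⟨σ, ?_, ?_, ?_, ?_⟩
    · rw [listPrepend_nil]; exact hσ
    · exact h0
    · intro i; simp
    · intro n; rw [listPrepend_nil]; simp
  | @cons p p' p'' a u α htr hrest ih =>
    obtain ⟨ρ'', hrun, h0', hidx, hout⟩ := ih h0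
    refine ⟨fun i => Nat.casesOn i p (fun j => ρ'' j), ?_, rfl, ?_, ?_⟩
    · intro i
      cases i with
      | zero =>
        have : listPrepend (a :: u) x 0 = a := listPrepend_cons_zero a u x
        rw [this]
        simpa [h0'] using htr
      | succ j =>
        have : listPrepend (a :: u) x (j + 1) = listPrepend u x j :=
          listPrepend_cons_succ a u x j
        rw [this]
        exact hrun j
    · intro i
      have : (a :: u).length + i = (u.length + i) + 1 := by simp; omega
      rw [this]
      exact hidx i
    · intro n
      have hlen : (a :: u).length + n = 1 + (u.length + n) := by simp; omega
      rw [hlen, T.outPrefix_add, T.outPrefix_one]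
      have e1 : shiftSeq (listPrepend (a :: u) x) 1 = listPrepend u x := by
        funext i
        show listPrepend (a :: u) x (1 + i) = listPrepend u x i
        rw [Nat.add_comm]
        exact listPrepend_cons_succ a u x i
      have e2 : shiftSeq (fun i => Nat.casesOn i p (fun j => ρ'' j)) 1 = ρ'' := by
        funext i
        show (fun i => Nat.casesOn i p (fun j => ρ'' j)) (1 + i) = ρ'' i
        rw [Nat.add_comm]
      rw [e1, e2, hout n]
      have : listPrepend (a :: u) x 0 = a := listPrepend_cons_zero a u x
      rw [this]
      show T.out p a (ρ'' 0) ++ (α ++ T.outPrefix x σ n) = _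
      rw [h0', List.append_assoc]

theorem IsRun.shift {T : NT A B} {x : ℕ → A} {ρ : ℕ → T.Q} (h : T.IsRun x ρ) (m : ℕ) :
    T.IsRun (shiftSeq x m) (shiftSeq ρ m) := by
  intro i
  exact h (m + i)

theorem Final.shift {T : NT A B} {ρ : ℕ → T.Q} (h : T.Final ρ) (m : ℕ) :
    T.Final (shiftSeq ρ m) := by
  intro i
  obtain ⟨j, hj, hF⟩ := h (m + i)
  refine ⟨j - m, by omega, ?_⟩
  show ρ (m + (j - m)) ∈ T.F
  rw [show m + (j - m) = j from by omega]
  exact hF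

theorem Final.of_tail {T : NT A B} {ρ' σ : ℕ → T.Q} {k : ℕ}
    (h : ∀ i, ρ' (k + i) = σ i) (hσ : T.Final σ) : T.Final ρ' := by
  intro i
  obtain ⟨j, hj, hF⟩ := hσ i
  exact ⟨k + j, by omega, by rw [h j]; exact hF⟩

theorem InfiniteOutput.shift {T : NT A B} {x : ℕ → A} {ρ : ℕ → T.Q}
    (h : T.InfiniteOutput x ρ) (m : ℕ) :
    T.InfiniteOutput (shiftSeq x m) (shiftSeq ρ m) := by
  intro k
  obtain ⟨n, hn⟩ := h (k + (T.outPrefix x ρ m).length)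
  refine ⟨max n m - m, ?_⟩
  have hmono := (T.outPrefix_prefix x ρ (le_max_left n m)).length_le
  have hsplit := T.outPrefix_add x ρ m (max n m - m)
  rw [show m + (max n m - m) = max n m from by omega] at hsplit
  have := congrArg List.length hsplit
  rw [List.length_append] at this
  omega

end NT

/-- Ends: every compatible set admits a family of infinite futures equalizing the
outputs of all initial steps ending in it. -/
theorem exists_end_function
    {A B : Type} [Fintype A] [Fintype B]
    (T : NT A B) (f : (ℕ → A) → Option (ℕ → B))
    (hU : T.Unambiguous) (hCl : T.Clean) (hTr : T.Trim)
    (hT : T.Computes f) (hcont : ContinuousPartial f)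
    (C : Set T.Q) (hC : T.Compatible C) :
    ∃ endC : T.Q → ℕ → B,
      ∀ (J : Set T.Q) (u : List A) (pre : T.Q → T.Q) (val : T.Q → List B),
        T.InitStepOn J u C pre val →
        ∀ p ∈ C, ∀ q ∈ C,
          listPrepend (val p) (endC p) = listPrepend (val q) (endC q) := by
  classical
  obtain ⟨x, ρ, h1, q1, hq1C, hq1F⟩ := hC
  by_cases hstep : ∃ J u pre val, T.InitStepOn J u C pre val
  case neg =>
    obtain ⟨z, σ, hacc, i0, hi0⟩ := hTr q1
    obtain ⟨n0, hn0⟩ := hCl z σ hacc 1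
    refine ⟨fun _ _ => (T.outPrefix z σ n0).get ⟨0, by omega⟩, ?_⟩
    intro J u pre val hS
    exact absurd ⟨J, u, pre, val, hS⟩ hstep
  case pos =>
  obtain ⟨J0, u0, pre0, val0, hS0⟩ := hstep
  -- recurrent states of each branch of the compatibility witness
  have hrec : ∀ p : T.Q, ∃ s : T.Q, ∀ N : ℕ, ∃ m, N ≤ m ∧ ρ p m = s := by
    intro p
    obtain ⟨s, hsfib⟩ := Finite.exists_infinite_fiber (ρ p)
    refine ⟨s, fun N => ?_⟩
    obtain ⟨m, hm, hlt⟩ := (Set.infinite_coe_iff.mp hsfib).exists_gt N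
    exact ⟨m, hlt.le, hm⟩
  choose s hs using hrec
  -- accepting continuations from the recurrent states, by trimness
  have htrim : ∀ p : T.Q, ∃ (w : ℕ → A) (τ : ℕ → T.Q),
      T.IsRun w τ ∧ τ 0 = s p ∧ T.Final τ ∧ T.InfiniteOutput w τ := by
    intro p
    obtain ⟨z, σ, hacc, i0, hi0⟩ := hTr (s p)
    refine ⟨NT.shiftSeq z i0, NT.shiftSeq σ i0, hacc.1.shift i0, ?_, hacc.2.2.shift i0,
      (hCl z σ hacc).shift i0⟩
    show σ (i0 + 0) = s p
    rw [Nat.add_zero]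
    exact hi0
  choose w τ hτrun hτ0 hτfin hτinf using htrim
  -- main per-step computation
  have main : ∀ (J : Set T.Q) (u : List A) (pre : T.Q → T.Q) (val : T.Q → List B),
      T.InitStepOn J u C pre val → ∃ Y : ℕ → B,
        f (listPrepend u x) = some Y ∧
        ∀ p ∈ C, ∀ n : ℕ, ∃ P : ℕ, ∀ m, P ≤ m → ρ p m = s p →
          ∀ i < n, Y i = listPrepend (val p)
            (listPrepend (T.outPrefix x (ρ p) m) (T.outWord (w p) (τ p) (hτinf p))) i := by
    intro J u pre val hS
    obtain ⟨hJI, ⟨⟨hCompJ, hCompC, h3, h4⟩, hsurj⟩⟩ := hS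
    obtain ⟨hq1J, hq1run⟩ := h3 q1 hq1C
    obtain ⟨Ψ, hΨrun, hΨ0, hΨidx, hΨout⟩ :=
      hq1run.prepend x (ρ q1) (h1 q1 hq1C).2 (h1 q1 hq1C).1
    have hΨacc : T.Accepting (listPrepend u x) Ψ :=
      ⟨hΨrun, by rw [hΨ0]; exact hJI hq1J, NT.Final.of_tail hΨidx hq1F⟩
    have hΨinf : T.InfiniteOutput (listPrepend u x) Ψ := hCl _ _ hΨacc
    have hfY : f (listPrepend u x) = some (T.outWord _ _ hΨinf) :=
      (hT _ _).mpr ⟨Ψ, hΨacc, hΨinf, T.outWord_spec _ _ hΨinf⟩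
    refine ⟨T.outWord _ _ hΨinf, hfY, ?_⟩
    intro p hp n
    obtain ⟨P, hP⟩ := hcont (listPrepend u x) _ hfY n
    refine ⟨P, fun m hPm hsm => ?_⟩
    set χ : ℕ → A := fun i => if i < m then x i else w p (i - m) with hχ
    set ψ : ℕ → T.Q := fun i => if i < m then ρ p i else τ p (i - m) with hψ
    have hψ0 : ψ 0 = p := by
      rcases Nat.eq_zero_or_pos m with hm0 | hm0
      · simp only [hψ]
        rw [if_neg (by omega), show (0 : ℕ) - m = 0 from by omega, hτ0 p, ← hsm, hm0,
          (h1 p hp).1]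
      · simp only [hψ]
        rw [if_pos hm0, (h1 p hp).1]
    have hψrun : T.IsRun χ ψ := by
      intro i
      by_cases him : i + 1 < m
      · simp only [hψ, hχ]
        rw [if_pos him, if_pos (by omega : i < m), if_pos (by omega : i < m)]
        exact (h1 p hp).2 i
      · by_cases him2 : i < m
        · simp only [hψ, hχ]
          rw [if_neg him, if_pos him2, if_pos him2,
            show i + 1 - m = 0 from by omega, hτ0 p, ← hsm,
            show m = i + 1 from by omega]
          exact (h1 p hp).2 i
        · simp only [hψ, hχ]
          rw [if_neg him, if_neg him2, if_neg him2,
            show i + 1 - m = (i - m) + 1 from by omega]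
          exact hτrun p (i - m)
    have hψtail : ∀ i, ψ (m + i) = τ p i := by
      intro i
      simp only [hψ]
      rw [if_neg (by omega), show m + i - m = i from by omega]
    obtain ⟨hpJ, hprun⟩ := h3 p hp
    obtain ⟨Φ, hΦrun, hΦ0, hΦidx, hΦout⟩ := hprun.prepend χ ψ hψrun hψ0
    have hΦacc : T.Accepting (listPrepend u χ) Φ :=
      ⟨hΦrun, by rw [hΦ0]; exact hJI hpJ,
        NT.Final.of_tail hΦidx (NT.Final.of_tail hψtail (hτfin p))⟩
    have hΦinf := hCl _ _ hΦacc
    have hχx : ∀ i < m, χ i = x i := by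
      intro i hi
      simp only [hχ]
      rw [if_pos hi]
    have hψρ : ∀ i ≤ m, ψ i = ρ p i := by
      intro i hi
      rcases lt_or_eq_of_le hi with h | h
      · simp only [hψ]
        rw [if_pos h]
      · subst h
        simp only [hψ]
        rw [if_neg (by omega), Nat.sub_self, hτ0 p, ← hsm]
    have hdecomp : ∀ N, T.outPrefix (listPrepend u χ) Φ (u.length + (m + N)) =
        (val p ++ T.outPrefix x (ρ p) m) ++ T.outPrefix (w p) (τ p) N := by
      intro N
      rw [hΦout (m + N), T.outPrefix_add χ ψ m N]
      have e1 : T.outPrefix χ ψ m = T.outPrefix x (ρ p) m := T.outPrefix_congr hχx hψρ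
      have e2 : NT.shiftSeq χ m = w p := by
        funext i
        show χ (m + i) = w p i
        simp only [hχ]
        rw [if_neg (by omega), show m + i - m = i from by omega]
      have e3 : NT.shiftSeq ψ m = τ p := funext hψtail
      rw [e1, e2, e3, ← List.append_assoc]
    have houteq : T.OutEq (listPrepend u χ) Φ
        (listPrepend (val p)
          (listPrepend (T.outPrefix x (ρ p) m) (T.outWord (w p) (τ p) (hτinf p)))) := by
      intro N
      have hpre : T.outPrefix (listPrepend u χ) Φ N <+:
          T.outPrefix (listPrepend u χ) Φ (u.length + (m + N)) :=
        T.outPrefix_prefix _ _ (by omega)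
      refine PrefixOf.of_isPrefix hpre ?_
      rw [hdecomp N, List.append_assoc]
      exact PrefixOf.append (val p)
        (PrefixOf.append _ (T.outWord_spec (w p) (τ p) (hτinf p) N))
    have hftgt : f (listPrepend u χ) = some (listPrepend (val p)
        (listPrepend (T.outPrefix x (ρ p) m) (T.outWord (w p) (τ p) (hτinf p)))) :=
      (hT _ _).mpr ⟨Φ, hΦacc, hΦinf, houteq⟩
    have hagree : ∀ i < P, listPrepend u x i = listPrepend u χ i := by
      intro i hiP
      by_cases hiu : i < u.length
      · rw [listPrepend_left u x hiu, listPrepend_left u χ hiu]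
      · push_neg at hiu
        have h1' := listPrepend_right u x (i - u.length)
        have h2' := listPrepend_right u χ (i - u.length)
        rw [show u.length + (i - u.length) = i from by omega] at h1' h2'
        rw [h1', h2']
        exact (hχx _ (by omega)).symm
    exact hP (listPrepend u χ) _ hftgt hagree
  -- assembly
  obtain ⟨Y0, hY0, hkey0⟩ := main J0 u0 pre0 val0 hS0
  refine ⟨fun p j => Y0 ((val0 p).length + j), ?_⟩
  intro J u pre val hS p hp q hq
  obtain ⟨Y, hY, hkey⟩ := main J u pre val hS
  suffices H : ∀ r ∈ C, listPrepend (val r) (fun j => Y0 ((val0 r).length + j)) = Y by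
    rw [H p hp, H q hq]
  intro r hr
  have hA : ∀ j, Y ((val r).length + j) = Y0 ((val0 r).length + j) := by
    intro j
    obtain ⟨P, hP⟩ := hkey r hr (max ((val r).length + j) ((val0 r).length + j) + 1)
    obtain ⟨P0, hP0⟩ := hkey0 r hr (max ((val r).length + j) ((val0 r).length + j) + 1)
    obtain ⟨m, hm, hsm⟩ := hs r (max P P0)
    have e1 := hP m (by omega) hsm ((val r).length + j) (by omega)
    have e2 := hP0 m (by omega) hsm ((val0 r).length + j) (by omega)
    rw [e1, e2, listPrepend_right, listPrepend_right]
  funext i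
  by_cases hi : i < (val r).length
  · obtain ⟨P, hP⟩ := hkey r hr (val r).length
    obtain ⟨m, hm, hsm⟩ := hs r P
    have e1 := hP m hm hsm i hi
    rw [listPrepend_left _ _ hi] at e1
    rw [listPrepend_left _ _ hi]
    exact e1.symm
  · push_neg at hi
    have key := listPrepend_right (val r) (fun j => Y0 ((val0 r).length + j)) (i - (val r).length)
    rw [show (val r).length + (i - (val r).length) = i from by omega] at key
    rw [key, ← hA (i - (val r).length)]
    congr 1
    omega
end

section
/- Let T be an unambiguous, clean and trim 1-nT computing a continuous partial function f : A^ω ⇀ B^ω. Let D be a compatible set and end_D : D → B^ω be any function such that for every initial step (J',w,D) and all p,q ∈ D, val(p)·end_D(p) = val(q)·end_D(q). Then for every initial step (J,u,C) and every step (C,v,D), and for all p,q ∈ D: adv(pre(p))·val_{C,D}(p)·end_D(p) = adv(pre(q))·val_{C,D}(q)·end_D(q), where pre and val_{C,D} refer to the step (C,v,D) and adv to the advances of the initial step (J,u,C) (whose values are pairwise mutual prefixes). -/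
section Aux

variable {A B : Type}

theorem listPrepend_append {B : Type} (a b : List B) (y : ℕ → B) :
    listPrepend (a ++ b) y = listPrepend a (listPrepend b y) := by
  funext i
  simp only [listPrepend, List.length_append]
  by_cases h1 : i < a.length
  · rw [dif_pos (by omega), dif_pos h1]
    exact List.getElem_append_left h1
  · rw [dif_neg h1]
    by_cases h2 : i < a.length + b.length
    · rw [dif_pos h2, dif_pos (show i - a.length < b.length by omega)]
      simp only [List.get_eq_getElem]
      exact List.getElem_append_right (le_of_not_gt h1)
    · rw [dif_neg h2, dif_neg (show ¬ i - a.length < b.length by omega)]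
      congr 1
      omega

theorem listPrepend_cancel {B : Type} (c : List B) {y z : ℕ → B}
    (h : listPrepend c y = listPrepend c z) : y = z := by
  funext i
  have := congrFun h (c.length + i)
  simpa [listPrepend, Nat.add_sub_cancel_left] using this

theorem listPrepend_cons {A : Type} (a : A) (u : List A) (x : ℕ → A) (i : ℕ) :
    listPrepend (a :: u) x (i + 1) = listPrepend u x i := by
  simp only [listPrepend, List.length_cons]
  by_cases h : i < u.length
  · rw [dif_pos (by omega), dif_pos h]
    rfl
  · rw [dif_neg (by omega), dif_neg h]
    congr 1
    omega

theorem listPrepend_zero_cons {A : Type} (a : A) (u : List A) (x : ℕ → A) :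
    listPrepend (a :: u) x 0 = a := by
  simp [listPrepend]

namespace NT

theorem FinRun.append {T : NT A B} {p r q : T.Q} {u v : List A} {α β : List B}
    (h1 : T.FinRun p u α r) (h2 : T.FinRun r v β q) :
    T.FinRun p (u ++ v) (α ++ β) q := by
  induction h1 with
  | nil => simpa using h2
  | cons ht _ ih =>
      rw [List.cons_append, List.append_assoc]
      exact FinRun.cons ht (ih h2)

/-- Extend a finite run by an infinite run. -/
theorem FinRun.extend {T : NT A B} {p q : T.Q} {w : List A} {α : List B}
    (h : T.FinRun p w α q) (x : ℕ → A) (σ : ℕ → T.Q)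
    (hσ : T.IsRun x σ) (h0 : σ 0 = q) :
    ∃ ρ : ℕ → T.Q, T.IsRun (listPrepend w x) ρ ∧ ρ 0 = p ∧
      ∀ i, ρ (w.length + i) = σ i := by
  induction h with
  | nil q =>
      refine ⟨σ, fun i => ?_, h0, fun i => by simp⟩
      have : listPrepend ([] : List A) x = x := by
        funext j; simp [listPrepend]
      rw [this]
      exact hσ i
  | @cons p p' q'' a u β ht _ ih =>
      obtain ⟨ρ', hρ'run, hρ'0, hρ'end⟩ := ih h0
      refine ⟨fun i => Nat.rec p (fun i _ => ρ' i) i, fun i => ?_, rfl, fun i => ?_⟩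
      · cases i with
        | zero =>
            show T.trans p (listPrepend (a :: u) x 0) (ρ' 0)
            rw [listPrepend_zero_cons, hρ'0]; exact ht
        | succ i => rw [listPrepend_cons]; exact hρ'run i
      · have : (a :: u).length + i = (u.length + i) + 1 := by simp; omega
        rw [this]
        exact hρ'end i

/-- From Trim: every state admits a final infinite run starting at it. -/
theorem Trim.final_run {T : NT A B} (hTr : T.Trim) (q : T.Q) :
    ∃ (x : ℕ → A) (σ : ℕ → T.Q), T.IsRun x σ ∧ σ 0 = q ∧ T.Final σ := by
  obtain ⟨x, ρ, ⟨hrun, _, hfin⟩, i, hi⟩ := hTr q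
  refine ⟨fun j => x (i + j), fun j => ρ (i + j), fun j => ?_, by simpa, fun n => ?_⟩
  · have := hrun (i + j)
    rwa [show i + j + 1 = i + (j + 1) from rfl] at this
  · obtain ⟨j, hj, hjF⟩ := hfin (i + n)
    refine ⟨j - i, by omega, ?_⟩
    show ρ (i + (j - i)) ∈ T.F
    rwa [show i + (j - i) = j by omega]

end NT

end Aux

/-- Ends after a step: the advances of an initial step followed by the outputs of a
further step and the ends of the target set equalize. -/
theorem end_after_step
    {A B : Type} [Fintype A] [Fintype B]
    (T : NT A B) (f : (ℕ → A) → Option (ℕ → B))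
    (hU : T.Unambiguous) (hCl : T.Clean) (hTr : T.Trim)
    (hT : T.Computes f) (hcont : ContinuousPartial f)
    (D : Set T.Q) (hD : T.Compatible D) (endD : T.Q → ℕ → B)
    (hend : ∀ (J' : Set T.Q) (w : List A) (pre₀ : T.Q → T.Q) (val₀ : T.Q → List B),
      T.InitStepOn J' w D pre₀ val₀ →
      ∀ p ∈ D, ∀ q ∈ D,
        listPrepend (val₀ p) (endD p) = listPrepend (val₀ q) (endD q))
    (J : Set T.Q) (u : List A) (C : Set T.Q)
    (pre : T.Q → T.Q) (val : T.Q → List B)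
    (com : List B) (adv : T.Q → List B)
    (hstep : T.InitStepOn J u C pre val) (hadv : T.AdvData C val com adv)
    (v : List A) (pre' : T.Q → T.Q) (val' : T.Q → List B)
    (hstep' : T.StepOn C v D pre' val') :
    ∀ p ∈ D, ∀ q ∈ D,
      listPrepend (adv (pre' p)) (listPrepend (val' p) (endD p)) =
      listPrepend (adv (pre' q)) (listPrepend (val' q) (endD q)) := by
  intro p hp q hq
  obtain ⟨hJI, ⟨⟨compJ, compC, hrunsC, huniqC⟩, hsurjC⟩⟩ := hstep
  obtain ⟨⟨compC', compD, hrunsD, huniqD⟩, hsurjD⟩ := hstep'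
  -- the composed initial step (J, u ++ v, D)
  have hcomp : T.InitStepOn J (u ++ v) D (pre ∘ pre')
      (fun r => val (pre' r) ++ val' r) := by
    refine ⟨hJI, ⟨⟨compJ, compD, fun r hr => ?_, fun r hr p' hp' h => ?_⟩,
      fun j hj => ?_⟩⟩
    · obtain ⟨hC, hrun2⟩ := hrunsD r hr
      obtain ⟨hJ, hrun1⟩ := hrunsC (pre' r) hC
      exact ⟨hJ, hrun1.append hrun2⟩
    · -- uniqueness via Trim + Unambiguous
      obtain ⟨α, hα⟩ := h
      obtain ⟨x', σ, hσrun, hσ0, hσfin⟩ := hTr.final_run r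
      obtain ⟨ρ₁, hρ₁run, hρ₁0, hρ₁end⟩ := hα.extend x' σ hσrun hσ0
      obtain ⟨hC, hrun2⟩ := hrunsD r hr
      obtain ⟨hJ, hrun1⟩ := hrunsC (pre' r) hC
      obtain ⟨ρ₂, hρ₂run, hρ₂0, hρ₂end⟩ := (hrun1.append hrun2).extend x' σ hσrun hσ0
      have hfin : ∀ ρ : ℕ → T.Q, (∀ i, ρ ((u ++ v).length + i) = σ i) → T.Final ρ := by
        intro ρ hρ n
        obtain ⟨j, hj, hjF⟩ := hσfin n
        exact ⟨(u ++ v).length + j, by omega, by rw [hρ j]; exact hjF⟩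
      have hacc₁ : T.Accepting (listPrepend (u ++ v) x') ρ₁ :=
        ⟨hρ₁run, hρ₁0 ▸ hJI hp', hfin ρ₁ hρ₁end⟩
      have hacc₂ : T.Accepting (listPrepend (u ++ v) x') ρ₂ :=
        ⟨hρ₂run, hρ₂0 ▸ hJI hJ, hfin ρ₂ hρ₂end⟩
      have := hU _ _ _ hacc₁ hacc₂
      calc p' = ρ₁ 0 := hρ₁0.symm
        _ = ρ₂ 0 := by rw [this]
        _ = (pre ∘ pre') r := hρ₂0
    · obtain ⟨c, hc, hcp⟩ := hsurjC j hj
      obtain ⟨r, hr, hrc⟩ := hsurjD c hc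
      exact ⟨r, hr, by simp [hrc, hcp]⟩
  have key := hend J (u ++ v) (pre ∘ pre') (fun r => val (pre' r) ++ val' r)
    hcomp p hp q hq
  have hvp : val (pre' p) = com ++ adv (pre' p) :=
    hadv.1 (pre' p) (hrunsD p hp).1
  have hvq : val (pre' q) = com ++ adv (pre' q) :=
    hadv.1 (pre' q) (hrunsD q hq).1
  simp only [hvp, hvq, List.append_assoc, listPrepend_append] at key
  exact listPrepend_cancel com key
end

section
/- Let T be an unambiguous 1-nT computing a partial function f : A^ω ⇀ B^ω, let x ∈ dom f, and let (q^x_i)_{i≥0} be the accepting run of T on x. For u ∈ A* and S ⊆ Q, write push_u(S) := {q' ∈ Q : q →^u q' for some q ∈ S}. Then for every i ≥ 0 and every S with q^x_i ∈ S ⊆ Q, there exist a compatible set C ⊆ S and an index j ≥ i such that push_{x[i+1:j]}(C) = push_{x[i+1:j]}(S). -/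
namespace NT

variable {A B : Type}

/-- `push u S`: states reachable from `S` by a run labelled by `u`. -/
def push (T : NT A B) (u : List A) (S : Set T.Q) : Set T.Q :=
  {q' | ∃ q ∈ S, ∃ α, T.FinRun q u α q'}

end NT

/-- The factor `x[i+1:j]` of an infinite word (letters `x i, …, x (j-1)` in 0-indexed
notation), empty when `j ≤ i`. -/
def wordFactor {A : Type} (x : ℕ → A) (i j : ℕ) : List A :=
  (List.range (j - i)).map fun k => x (i + k)

namespace NT

variable {A B : Type}

/-- `q` has runs of every finite length reading `x` from position `k`. -/
def AliveAt (T : NT A B) (x : ℕ → A) (k : ℕ) (q : T.Q) : Prop :=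
  ∀ n : ℕ, ∃ σ : ℕ → T.Q, σ 0 = q ∧ ∀ m < n, T.trans (σ m) (x (k + m)) (σ (m + 1))

open Classical in
lemma aliveAt_step (T : NT A B) (x : ℕ → A) (k : ℕ) (q : T.Q)
    (h : T.AliveAt x k q) :
    ∃ q', T.trans q (x k) q' ∧ T.AliveAt x (k + 1) q' := by
  by_contra hcon
  push_neg at hcon
  -- each successor has a bound on run lengths
  let g : T.Q → ℕ := fun p => if hp : ¬ T.AliveAt x (k + 1) p then
    (not_forall.mp hp).choose else 0
  have hg : ∀ p, ¬ T.AliveAt x (k + 1) p →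
      ¬ ∃ σ : ℕ → T.Q, σ 0 = p ∧ ∀ m < g p, T.trans (σ m) (x (k + 1 + m)) (σ (m + 1)) := by
    intro p hp
    have : g p = (not_forall.mp hp).choose := dif_pos hp
    rw [this]
    exact (not_forall.mp hp).choose_spec
  set N := Finset.univ.sup g with hN
  obtain ⟨σ, hσ0, hσ⟩ := h (N + 1)
  have ht0 : T.trans q (x k) (σ 1) := by
    have := hσ 0 (Nat.succ_pos N)
    simpa [hσ0] using this
  have halive : ¬ T.AliveAt x (k + 1) (σ 1) := hcon (σ 1) ht0
  refine hg (σ 1) halive ⟨fun m => σ (m + 1), rfl, ?_⟩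
  intro m hm
  have hmN : m + 1 < N + 1 := Nat.succ_lt_succ (lt_of_lt_of_le hm
    (le_trans (Finset.le_sup (Finset.mem_univ (σ 1))) (le_of_eq hN.symm)))
  have := hσ (m + 1) hmN
  have heq : k + (m + 1) = k + 1 + m := by omega
  rw [heq] at this
  exact this

open Classical in
lemma aliveAt_koenig (T : NT A B) (x : ℕ → A) (k : ℕ) (q : T.Q)
    (h : T.AliveAt x k q) :
    ∃ σ : ℕ → T.Q, σ 0 = q ∧ ∀ m : ℕ, T.trans (σ m) (x (k + m)) (σ (m + 1)) := by
  let F : (n : ℕ) → {p : T.Q // T.AliveAt x (k + n) p} := fun n =>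
    Nat.rec ⟨q, h⟩
      (fun n p => ⟨(T.aliveAt_step x (k + n) p.1 p.2).choose,
        (T.aliveAt_step x (k + n) p.1 p.2).choose_spec.2⟩) n
  refine ⟨fun n => (F n).1, rfl, fun m => ?_⟩
  exact (T.aliveAt_step x (k + m) (F m).1 (F m).2).choose_spec.1

lemma finRun_to_fun (T : NT A B) {q q' : T.Q} {u : List A} {α : List B}
    (h : T.FinRun q u α q') :
    ∃ σ : ℕ → T.Q, σ 0 = q ∧ σ u.length = q' ∧
      ∀ (m : ℕ) (hm : m < u.length), T.trans (σ m) (u.get ⟨m, hm⟩) (σ (m + 1)) := by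
  induction h with
  | nil p => exact ⟨fun _ => p, rfl, rfl, fun m hm => absurd hm (Nat.not_lt_zero m)⟩
  | @cons p p' p'' a u α ht _ ih =>
    obtain ⟨σ, hσ0, hσl, hσ⟩ := ih
    refine ⟨fun m => Nat.rec p (fun m _ => σ m) m, rfl, hσl, fun m hm => ?_⟩
    cases m with
    | zero => simpa [hσ0] using ht
    | succ m => exact hσ m (Nat.lt_of_succ_lt_succ hm)

end NT

/-- Compatible sets cover the future of any set containing the current state of the
accepting run. -/
theorem compatible_covers_future
    {A B : Type} [Fintype A] [Fintype B]
    (T : NT A B) (f : (ℕ → A) → Option (ℕ → B))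
    (hU : T.Unambiguous) (hT : T.Computes f)
    (x : ℕ → A) (y : ℕ → B) (hx : f x = some y)
    (ρ : ℕ → T.Q) (hρ : T.Accepting x ρ) :
    ∀ (i : ℕ) (S : Set T.Q), ρ i ∈ S →
      ∃ C : Set T.Q, C ⊆ S ∧ T.Compatible C ∧
        ∃ j : ℕ, i ≤ j ∧
          T.push (wordFactor x i j) C = T.push (wordFactor x i j) S := by
  classical
  intro i S hSρ
  set x' : ℕ → A := fun k => x (i + k) with hx'def
  set C : Set T.Q := {q | q ∈ S ∧ ∃ σ : ℕ → T.Q, σ 0 = q ∧ T.IsRun x' σ} with hCdef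
  have hCS : C ⊆ S := fun q hq => hq.1
  have hρshift : (fun k => ρ (i + k)) 0 = ρ i ∧ T.IsRun x' (fun k => ρ (i + k)) :=
    ⟨rfl, fun k => hρ.1 (i + k)⟩
  have hρiC : ρ i ∈ C := ⟨hSρ, fun k => ρ (i + k), hρshift⟩
  -- Compatibility of C
  have hComp : T.Compatible C := by
    refine ⟨x', fun q => if q = ρ i then (fun k => ρ (i + k)) else
      (if h : ∃ σ : ℕ → T.Q, σ 0 = q ∧ T.IsRun x' σ then Classical.choose h
        else fun _ => q), ?_, ρ i, hρiC, ?_⟩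
    · intro q hq
      by_cases hqi : q = ρ i
      · subst hqi; simpa using hρshift
      · simp only [if_neg hqi, dif_pos hq.2]
        exact Classical.choose_spec hq.2
    · show T.Final (if ρ i = ρ i then (fun k => ρ (i + k)) else _)
      rw [if_pos rfl]
      intro m
      obtain ⟨j, hj, hjF⟩ := hρ.2.2 (i + m)
      refine ⟨j - i, by omega, ?_⟩
      have h2 : i + (j - i) = j := by omega
      simpa [h2] using hjF
  -- the bound
  let g : T.Q → ℕ := fun p => if hp : ¬ T.AliveAt x' 0 p then
    (not_forall.mp hp).choose else 0
  have hg : ∀ p, ¬ T.AliveAt x' 0 p →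
      ¬ ∃ σ : ℕ → T.Q, σ 0 = p ∧ ∀ m < g p, T.trans (σ m) (x' (0 + m)) (σ (m + 1)) := by
    intro p hp
    have : g p = (not_forall.mp hp).choose := dif_pos hp
    rw [this]
    exact (not_forall.mp hp).choose_spec
  set N := Finset.univ.sup g with hN
  refine ⟨C, hCS, hComp, i + N, Nat.le_add_right i N, ?_⟩
  have hlen : (wordFactor x i (i + N)).length = N := by
    simp [wordFactor]
  have hget : ∀ (m : ℕ) (hm : m < (wordFactor x i (i + N)).length),
      (wordFactor x i (i + N)).get ⟨m, hm⟩ = x' m := by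
    intro m hm
    simp [wordFactor, x']
  apply Set.eq_of_subset_of_subset
  · rintro q' ⟨p, hp, α, hr⟩
    exact ⟨p, hCS hp, α, hr⟩
  · rintro q' ⟨p, hp, α, hr⟩
    obtain ⟨σ, hσ0, hσl, hσ⟩ := T.finRun_to_fun hr
    -- p is alive
    have halive : T.AliveAt x' 0 p := by
      by_contra hna
      refine hg p hna ⟨σ, hσ0, fun m hm => ?_⟩
      have hmN : m < (wordFactor x i (i + N)).length := by
        rw [hlen]
        exact lt_of_lt_of_le hm (le_trans (Finset.le_sup (Finset.mem_univ p))
          (le_of_eq hN.symm))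
      have := hσ m hmN
      rw [hget m hmN] at this
      rw [Nat.zero_add]
      exact this
    obtain ⟨σ', hσ'0, hσ'⟩ := T.aliveAt_koenig x' 0 p halive
    have hpC : p ∈ C := ⟨hp, σ', hσ'0, fun m => by have := hσ' m; rwa [Nat.zero_add] at this⟩
    exact ⟨p, hpC, α, hr⟩
end

section
/- Let T be an unambiguous, clean, trim and productive 1-nT computing a continuous partial function f : A^ω ⇀ B^ω. Let (J,u,S) be an initial step and (S,u',S) a step such that u' ≠ ε, the map pre_{S,S} of the step (S,u',S) is the identity function on S, and some state of S is final. Then val_{S,S}(q) ≠ ε for every q ∈ S. -/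
namespace NT

variable {A B : Type}

/-- Productivity of a (clean) 1-nT. -/
def Productive (T : NT A B) : Prop :=
  ∀ (q₁ q₂ q₁' q₂' : T.Q) (u u' : List A) (α₁ α₁' α₂ α₂' : List B),
    q₁ ∈ T.I → q₂ ∈ T.I → q₁' ∈ T.F → u' ≠ [] →
    T.FinRun q₁ u α₁ q₁' → T.FinRun q₁' u' α₁' q₁' →
    T.FinRun q₂ u α₂ q₂' → T.FinRun q₂' u' α₂' q₂' →
    α₂' ≠ []

end NT

/-- Productivity of identity loops of steps: in a productive 1-nT, an identity step
on a nonempty word through a set containing a final state produces nonempty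
outputs everywhere. -/
theorem productive_identity_step
    {A B : Type} [Fintype A] [Fintype B]
    (T : NT A B) (f : (ℕ → A) → Option (ℕ → B))
    (hU : T.Unambiguous) (hCl : T.Clean) (hTr : T.Trim) (hPr : T.Productive)
    (hT : T.Computes f) (hcont : ContinuousPartial f)
    (J : Set T.Q) (u : List A) (S : Set T.Q)
    (pre : T.Q → T.Q) (val : T.Q → List B)
    (hstep : T.InitStepOn J u S pre val)
    (u' : List A) (pre' : T.Q → T.Q) (val' : T.Q → List B)
    (hstep' : T.StepOn S u' S pre' val')
    (hu' : u' ≠ []) (hid : ∀ q ∈ S, pre' q = q)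
    (hfin : ∃ q ∈ S, q ∈ T.F) :
    ∀ q ∈ S, val' q ≠ [] := by
  intro q hq
  obtain ⟨q₀, hq₀S, hq₀F⟩ := hfin
  obtain ⟨hJI, ⟨⟨_, _, hruns, _⟩, _⟩⟩ := hstep
  obtain ⟨⟨_, _, hruns', _⟩, _⟩ := hstep'
  -- run pre q₀ →^u q₀ with pre q₀ ∈ I
  obtain ⟨hpq₀J, hr₀⟩ := hruns q₀ hq₀S
  obtain ⟨hpqJ, hr⟩ := hruns q hq
  -- loops
  have hl₀ := (hruns' q₀ hq₀S).2
  rw [hid q₀ hq₀S] at hl₀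
  have hl := (hruns' q hq).2
  rw [hid q hq] at hl
  exact hPr (pre q₀) (pre q) q₀ q u u' (val q₀) (val' q₀) (val q) (val' q)
    (hJI hpq₀J) (hJI hpqJ) hq₀F hu' hr₀ hl₀ hr hl
end

section
/- There do not exist integers M ≥ 0 and N ≥ 1 and finite words u₁,u₂,u₃,u₄,u₃',u₄' over the alphabet {0,1,2} with u₄ ≠ ε and u₄' ≠ ε such that for all n ≥ 0, both u₁ u₂ⁿ u₃ (u₄)^ω = 0^{M+Nn} 1 0^ω and u₁ u₂ⁿ u₃' (u₄')^ω = 0^{2(M+Nn)} 2 0^ω hold as equalities of infinite words. -/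
lemma getElem_idx_congr {B : Type} (l : List B) {i j : ℕ} (h : i = j)
    (hi : i < l.length) : l[i] = l[j]'(h ▸ hi) := by subst h; rfl

lemma powList_zero {B : Type} (v : List B) : powList v 0 = [] := rfl

lemma powList_succ {B : Type} (v : List B) (n : ℕ) :
    powList v (n+1) = v ++ powList v n := by
  simp [powList, List.replicate_succ]

lemma powList_length {B : Type} (v : List B) (n : ℕ) :
    (powList v n).length = n * v.length := by
  induction n with
  | zero => simp [powList_zero]
  | succ n ih => rw [powList_succ, List.length_append, ih]; ring

lemma powList_getElem {B : Type} {v : List B} (hv : v ≠ []) (n k : ℕ)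
    (hk : k < (powList v n).length) :
    (powList v n)[k] = v[k % v.length]'(Nat.mod_lt _ (List.length_pos_iff.mpr hv)) := by
  induction n generalizing k with
  | zero => simp [powList_zero] at hk
  | succ n ih =>
    have hk' : k < (v ++ powList v n).length := by
      rw [← powList_succ]; exact hk
    rw [List.getElem_of_eq (powList_succ v n) hk]
    by_cases h : k < v.length
    · rw [List.getElem_append_left h]
      exact getElem_idx_congr v (Nat.mod_eq_of_lt h).symm h
    · push_neg at h
      rw [List.getElem_append_right h, ih]
      refine getElem_idx_congr v ?_ _
      conv_rhs => rw [show k = v.length + (k - v.length) by omega, Nat.add_mod_left]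

lemma eq_prefix {B : Type} {u v : List B} {y : ℕ → B} (h : EqUVomega u v y)
    (i : ℕ) (hi : i < u.length) : y i = u[i] := by
  have hi0 : i < (u ++ powList v 0).length := by simpa [powList_zero] using hi
  have h0 : (u ++ powList v 0)[i] = y i := h 0 i hi0
  rw [← h0, List.getElem_append_left hi]

lemma eq_period {B : Type} {u v : List B} {y : ℕ → B} (h : EqUVomega u v y)
    (hv : v ≠ []) (k : ℕ) :
    y (u.length + k) = v[k % v.length]'(Nat.mod_lt _ (List.length_pos_iff.mpr hv)) := by
  have hvpos : 1 ≤ v.length := List.length_pos_iff.mpr hv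
  have hlt : u.length + k < (u ++ powList v (k+1)).length := by
    rw [List.length_append, powList_length]
    nlinarith
  have h1 : (u ++ powList v (k+1))[u.length + k] = y (u.length + k) :=
    h (k+1) (u.length + k) hlt
  rw [← h1, List.getElem_append_right (Nat.le_add_right _ _),
    getElem_idx_congr (powList v (k+1)) (show u.length + k - u.length = k by omega)]
  exact powList_getElem hv (k+1) k (by rw [powList_length]; nlinarith)

lemma core {u₁ u₂ u₃ u₄ : List (Fin 3)} {c : Fin 3} (hc : c ≠ 0) (hu₄ : u₄ ≠ [])
    (p : ℕ → ℕ) (hinj : Function.Injective p) (hpn : ∀ n, n ≤ p n)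
    (h : ∀ n, EqUVomega (u₁ ++ powList u₂ n ++ u₃) u₄
      (fun i => if i = p n then c else 0)) :
    (∀ j (hj : j < u₂.length), u₂[j] = 0) ∧
    ∀ n, u₁.length ≤ n →
      u₁.length + n * u₂.length ≤ p n ∧ p n < u₁.length + n * u₂.length + u₃.length := by
  set L : ℕ → ℕ := fun n => u₁.length + n * u₂.length + u₃.length with hL
  have hlen : ∀ n, (u₁ ++ powList u₂ n ++ u₃).length = L n := by
    intro n
    simp only [List.length_append, powList_length, hL]
  have hu₄pos : 0 < u₄.length := List.length_pos_iff.mpr hu₄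
  -- the periodic tail forces `p n` to be inside the prefix word
  have tail : ∀ n, p n < L n := by
    intro n
    by_contra hge
    push_neg at hge
    set k := p n - L n with hk
    have e1 := eq_period (h n) hu₄ k
    have e2 := eq_period (h n) hu₄ (k + u₄.length)
    rw [hlen n] at e1 e2
    rw [if_pos (by omega)] at e1
    rw [if_neg (by omega)] at e2
    have e2' : (0 : Fin 3) = u₄[k % u₄.length]'(Nat.mod_lt _ hu₄pos) :=
      e2.trans (getElem_idx_congr u₄ (Nat.add_mod_right k u₄.length) _)
    exact hc (e1.trans e2'.symm)
  -- letters in the middle (u₂-power) segment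
  have midval : ∀ n j, j < n * u₂.length → ∀ (hu₂ : 0 < u₂.length),
      (if u₁.length + j = p n then c else (0 : Fin 3)) =
        u₂[j % u₂.length]'(Nat.mod_lt _ hu₂) := by
    intro n j hj hu₂pos
    have hi : u₁.length + j < (u₁ ++ powList u₂ n ++ u₃).length := by
      rw [hlen n]; simp only [hL]; omega
    have e := eq_prefix (h n) (u₁.length + j) hi
    rw [e]
    have hj1 : u₁.length + j < (u₁ ++ powList u₂ n).length := by
      rw [List.length_append, powList_length]; omega
    rw [List.getElem_append_left hj1,
      List.getElem_append_right (Nat.le_add_right _ _)]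
    rw [getElem_idx_congr (powList u₂ n) (show u₁.length + j - u₁.length = j by omega)]
    exact powList_getElem (List.length_pos_iff.mp hu₂pos) n j (by rw [powList_length]; omega)
  have hu₂mul : ∀ j, j < u₂.length → 0 < u₂.length := fun j hj => by omega
  have mid : ∀ j (hj : j < u₂.length), u₂[j] = 0 := by
    intro j hj
    have hu₂pos : 0 < u₂.length := by omega
    have hj1 : j < (j+1) * u₂.length := by nlinarith
    have hj2 : j < (j+2) * u₂.length := by nlinarith
    have h1 := midval (j+1) j hj1 hu₂pos
    have h2 := midval (j+2) j hj2 hu₂pos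
    have hne : p (j+1) ≠ p (j+2) := fun he => by have := hinj he; omega
    have key : u₂[j % u₂.length]'(Nat.mod_lt _ hu₂pos) = 0 := by
      rcases eq_or_ne (u₁.length + j) (p (j+1)) with he | he
      · rw [if_neg (by rw [he]; exact hne)] at h2
        exact h2.symm
      · rw [if_neg he] at h1
        exact h1.symm
    exact (getElem_idx_congr u₂ (Nat.mod_eq_of_lt hj) _).symm.trans key
  refine ⟨mid, fun n hn => ⟨?_, tail n⟩⟩
  by_contra hlt
  push_neg at hlt
  have hge : u₁.length ≤ p n := le_trans hn (hpn n)
  set j := p n - u₁.length with hj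
  have hjlt : j < n * u₂.length := by omega
  have hu₂pos : 0 < u₂.length := by
    rcases Nat.eq_zero_or_pos u₂.length with h0 | h0
    · rw [h0, Nat.mul_zero] at hjlt; omega
    · exact h0
  have e := midval n j hjlt hu₂pos
  rw [if_pos (by omega)] at e
  rw [mid _ (Nat.mod_lt _ hu₂pos)] at e
  exact hc e

/-- Combinatorial core of the fact that the function `double` is not sequential. -/
theorem double_not_sequential_core :
    ¬ ∃ (M N : ℕ) (u₁ u₂ u₃ u₄ u₃' u₄' : List (Fin 3)),
      1 ≤ N ∧ u₄ ≠ [] ∧ u₄' ≠ [] ∧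
      ∀ n : ℕ,
        EqUVomega (u₁ ++ powList u₂ n ++ u₃) u₄
          (fun i => if i = M + N * n then 1 else 0) ∧
        EqUVomega (u₁ ++ powList u₂ n ++ u₃') u₄'
          (fun i => if i = 2 * (M + N * n) then 2 else 0) := by
  rintro ⟨M, N, u₁, u₂, u₃, u₄, u₃', u₄', hN, h4, h4', hall⟩
  have hmul : ∀ n : ℕ, n ≤ N * n := fun n => Nat.le_mul_of_pos_left n (by omega)
  have hinj1 : Function.Injective (fun n => M + N * n) := by
    intro a b hab
    simp only at hab
    exact Nat.eq_of_mul_eq_mul_left (by omega : 0 < N) (by omega : N * a = N * b)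
  have hinj2 : Function.Injective (fun n => 2 * (M + N * n)) := by
    intro a b hab
    simp only at hab
    exact Nat.eq_of_mul_eq_mul_left (by omega : 0 < N) (by omega : N * a = N * b)
  have h1 := core (c := 1) (by decide) h4 (fun n => M + N * n) hinj1
    (fun n => by show n ≤ M + N * n; have := hmul n; omega) (fun n => (hall n).1)
  have h2 := core (c := 2) (by decide) h4' (fun n => 2 * (M + N * n)) hinj2
    (fun n => by show n ≤ 2 * (M + N * n); have := hmul n; omega) (fun n => (hall n).2)
  rcases Nat.eq_zero_or_pos u₂.length with hK | hK
  · -- u₂ empty: M + N n would be bounded, contradiction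
    set n := u₁.length + u₃.length + M with hn
    have hb : M + N * n < u₁.length + n * u₂.length + u₃.length := (h1.2 n (by omega)).2
    rw [hK, Nat.mul_zero] at hb
    have := hmul n
    omega
  · -- u₂ nonempty
    set n := u₁.length + u₃'.length with hn
    have hb1 : u₁.length + n * u₂.length ≤ M + N * n := (h1.2 n (by omega)).1
    have hb2 : 2 * (M + N * n) < u₁.length + n * u₂.length + u₃'.length := (h2.2 n (by omega)).2
    have : n ≤ n * u₂.length := Nat.le_mul_of_pos_right n hK
    omega
end
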